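/- arXiv:1712.08954 — 8 statements merged into one kernel-verified Lean document; each statement's English description precedes it below -/
import Mathlib

section
/- The player-compatibility relation is transitive: if player i is more compatible with strategy s_i* than player j is with s_j*, and player j is more compatible with s_j* than player k is with s_k*, then player i is more compatible with s_i* than player k is with s_k*. -/
open scoped Classical

noncomputable section

variable {ι : Type} [Fintype ι] [DecidableEq ι] {S : ι → Type} [∀ i, Fintype (S i)]

/-- A full-support correlated strategy profile on `S = ∏ i, S i`. -/
def FullSupport (σ : (∀ i, S i) → ℝ) : Prop :=
  (∀ s, 0 < σ s) ∧ ∑ s, σ s = 1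

/-- Expected payoff to player `i` from playing `si` against the correlated profile `σ`. -/
def expPay (U : ∀ _i : ι, (∀ j, S j) → ℝ) (i : ι) (si : S i) (σ : (∀ j, S j) → ℝ) : ℝ :=
  ∑ s, σ s * U i (Function.update s i si)

/-- `σ` and `τ` have the same marginal on the strategies of players other than `i` and `j`. -/
def SameMarginal (i j : ι) (σ τ : (∀ k, S k) → ℝ) : Prop :=
  ∀ s : ∀ k, S k,
    (∑ si : S i, ∑ sj : S j, σ (Function.update (Function.update s i si) j sj)) =
    (∑ si : S i, ∑ sj : S j, τ (Function.update (Function.update s i si) j sj))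

/-- Player `i` is more compatible with `si` than player `j` is with `sj`:
whenever `sj` is weakly optimal for `j` against a full-support correlated profile `σ`,
`si` is strictly optimal for `i` against every full-support correlated profile `τ`
with the same marginal as `σ` on the players other than `i` and `j`. -/
def MoreCompatible (U : ∀ _i : ι, (∀ j, S j) → ℝ) (i j : ι) (si : S i) (sj : S j) : Prop :=
  ∀ σ : (∀ k, S k) → ℝ, FullSupport σ →
    (∀ sj' : S j, expPay U j sj' σ ≤ expPay U j sj σ) →
    ∀ τ : (∀ k, S k) → ℝ, FullSupport τ → SameMarginal i j σ τ →
      ∀ si' : S i, si' ≠ si → expPay U i si' τ < expPay U i si τ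

set_option linter.unusedSectionVars false

/-! ### Auxiliary machinery -/

lemma sum_sum_update (i : ι) (F : (∀ l, S l) → ℝ) :
    ∑ s : ∀ l, S l, ∑ x : S i, F (Function.update s i x)
      = (Fintype.card (S i) : ℝ) * ∑ s : ∀ l, S l, F s := by
  have key : ∑ p : S i × (∀ l, S l), F (Function.update p.2 i p.1)
      = ∑ p : S i × (∀ l, S l), F p.2 := by
    refine Fintype.sum_bijective (fun p => (p.2 i, Function.update p.2 i p.1)) ?_ _ _ (fun p => rfl)
    refine Function.Involutive.bijective (fun p => ?_)
    simp [Function.update_idem]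
  rw [Fintype.sum_prod_type, Finset.sum_comm] at key
  rw [key, Fintype.sum_prod_type]
  simp [Finset.sum_const, nsmul_eq_mul, Finset.card_univ]

lemma sum_rot {α β γ : Type} [Fintype α] [Fintype β] [Fintype γ] (f : α → β → γ → ℝ) :
    ∑ c : γ, ∑ a : α, ∑ b : β, f a b c = ∑ a : α, ∑ b : β, ∑ c : γ, f a b c := by
  rw [Finset.sum_comm]
  exact Finset.sum_congr rfl fun a _ => Finset.sum_comm

section Upd
variable {i j k : ι}

lemma upd_L_i (hij : i ≠ j) (hik : i ≠ k) (s : ∀ l, S l) (x x' : S i) (y : S j) (z : S k) :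
    Function.update (Function.update (Function.update (Function.update s i x) j y) k z) i x'
      = Function.update (Function.update (Function.update s i x') j y) k z := by
  rw [Function.update_comm hik.symm, Function.update_comm hij.symm, Function.update_idem]

lemma upd_L_j (hjk : j ≠ k) (s : ∀ l, S l) (y y' : S j) (z : S k) :
    Function.update (Function.update (Function.update s j y) k z) j y'
      = Function.update (Function.update s j y') k z := by
  rw [Function.update_comm hjk.symm, Function.update_idem]

lemma upd_L_jk_i (hij : i ≠ j) (hik : i ≠ k) (s : ∀ l, S l) (x : S i) (y : S j) (z : S k) :
    Function.update (Function.update (Function.update s j y) k z) i x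
      = Function.update (Function.update (Function.update s i x) j y) k z := by
  rw [Function.update_comm hik.symm, Function.update_comm hij.symm]

lemma upd_L_ij_ij (hij : i ≠ j) (s : ∀ l, S l) (x x' : S i) (y y' : S j) :
    Function.update (Function.update (Function.update (Function.update s i x) j y) i x') j y'
      = Function.update (Function.update s i x') j y' := by
  rw [Function.update_comm hij.symm, Function.update_idem, Function.update_idem]

end Upd

/-- The triple marginal (denominator of the mixed profile). -/
def mden (i j k : ι) (σ : (∀ l, S l) → ℝ) (s : ∀ l, S l) : ℝ :=
  ∑ x : S i, ∑ y : S j, ∑ z : S k,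
    σ (Function.update (Function.update (Function.update s i x) j y) k z)

section Mden
variable {i j k : ι} (σ : (∀ l, S l) → ℝ)

lemma mden_i (s : ∀ l, S l) (x0 : S i) :
    mden i j k σ (Function.update s i x0) = mden i j k σ s := by
  simp only [mden, Function.update_idem]

lemma mden_j (hij : i ≠ j) (s : ∀ l, S l) (y0 : S j) :
    mden i j k σ (Function.update s j y0) = mden i j k σ s := by
  simp only [mden, Function.update_comm hij.symm, Function.update_idem]

lemma mden_k (hik : i ≠ k) (hjk : j ≠ k) (s : ∀ l, S l) (z0 : S k) :
    mden i j k σ (Function.update s k z0) = mden i j k σ s := by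
  simp only [mden, Function.update_comm hik.symm, Function.update_comm hjk.symm,
    Function.update_idem]

end Mden

/-- The mixed profile: `(i,j)`-coordinates from `σ`, `k`-coordinate from `τ`,
conditionally independent given the remaining coordinates. -/
def mix (i j k : ι) (σ τ : (∀ l, S l) → ℝ) (s : ∀ l, S l) : ℝ :=
  (∑ z : S k, σ (Function.update s k z)) *
    (∑ x : S i, ∑ y : S j, τ (Function.update (Function.update s i x) j y)) /
    mden i j k σ s

section MixVal
variable {i j k : ι} (σ τ : (∀ l, S l) → ℝ)

lemma mix_upd3 (hij : i ≠ j) (hjk : j ≠ k) (hik : i ≠ k) (s : ∀ l, S l)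
    (x : S i) (y : S j) (z : S k) :
    mix i j k σ τ (Function.update (Function.update (Function.update s i x) j y) k z)
      = (∑ z' : S k, σ (Function.update (Function.update (Function.update s i x) j y) k z')) *
        (∑ x' : S i, ∑ y' : S j,
          τ (Function.update (Function.update (Function.update s i x') j y') k z)) /
        mden i j k σ s := by
  simp only [mix, Function.update_idem, upd_L_i hij hik, upd_L_j hjk,
    mden_k σ hik hjk, mden_j σ hij, mden_i σ]

lemma mix_updJK (hij : i ≠ j) (hjk : j ≠ k) (hik : i ≠ k) (s : ∀ l, S l)
    (y : S j) (z : S k) :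
    mix i j k σ τ (Function.update (Function.update s j y) k z)
      = (∑ z' : S k, σ (Function.update (Function.update s j y) k z')) *
        (∑ x' : S i, ∑ y' : S j,
          τ (Function.update (Function.update (Function.update s i x') j y') k z)) /
        mden i j k σ s := by
  simp only [mix, Function.update_idem, upd_L_jk_i hij hik, upd_L_j hjk,
    mden_k σ hik hjk, mden_j σ hij]

lemma mix_updIJ (hij : i ≠ j) (hjk : j ≠ k) (hik : i ≠ k) (s : ∀ l, S l)
    (x : S i) (y : S j) :
    mix i j k σ τ (Function.update (Function.update s i x) j y)
      = (∑ z' : S k, σ (Function.update (Function.update (Function.update s i x) j y) k z')) *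
        (∑ x' : S i, ∑ y' : S j, τ (Function.update (Function.update s i x') j y')) /
        mden i j k σ s := by
  simp only [mix, upd_L_ij_ij hij, mden_j σ hij, mden_i σ]

end MixVal

/-- Counting lemma: summing a function of the triple update over everything. -/
lemma sum3_count (i j k : ι) (g : (∀ l, S l) → ℝ) :
    ∑ s : ∀ l, S l, ∑ x : S i, ∑ y : S j, ∑ z : S k,
        g (Function.update (Function.update (Function.update s i x) j y) k z)
      = ((Fintype.card (S i) : ℝ) * (Fintype.card (S j) : ℝ) * (Fintype.card (S k) : ℝ)) *
          ∑ s : ∀ l, S l, g s := by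
  have t1 := sum_sum_update i
    (fun w => ∑ y : S j, ∑ z : S k, g (Function.update (Function.update w j y) k z))
  have t2 := sum_sum_update j (fun w => ∑ z : S k, g (Function.update w k z))
  have t3 := sum_sum_update k g
  rw [t1, t2, t3]
  ring

/-- The player-compatibility relation is transitive. -/
theorem compatibility_trans
    (U : ∀ _i : ι, (∀ j, S j) → ℝ)
    (hcard : ∀ i, 2 ≤ Fintype.card (S i))
    (i j k : ι) (hij : i ≠ j) (hjk : j ≠ k) (hik : i ≠ k)
    (si : S i) (sj : S j) (sk : S k)
    (h1 : MoreCompatible U i j si sj) (h2 : MoreCompatible U j k sj sk) :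
    MoreCompatible U i k si sk := by
  intro σ hσ hk τ hτ hmarg si' hne
  have huniv : ∀ l : ι, (Finset.univ : Finset (S l)).Nonempty := fun l =>
    Finset.card_pos.mp (by rw [Finset.card_univ]; exact lt_of_lt_of_le (by norm_num) (hcard l))
  have hM : ∀ s, 0 < mden i j k σ s := fun s =>
    Finset.sum_pos (fun x _ => Finset.sum_pos (fun y _ =>
      Finset.sum_pos (fun z _ => hσ.1 _) (huniv k)) (huniv j)) (huniv i)
  -- the triple marginal of τ agrees with that of σ
  have hmτ : ∀ s : ∀ l, S l, (∑ x : S i, ∑ y : S j, ∑ z : S k,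
      τ (Function.update (Function.update (Function.update s i x) j y) k z))
        = mden i j k σ s := by
    intro s
    have eσ : mden i j k σ s = ∑ y : S j, ∑ x : S i, ∑ z : S k,
        σ (Function.update (Function.update (Function.update s i x) j y) k z) := by
      rw [mden]; exact Finset.sum_comm
    have eτ : (∑ x : S i, ∑ y : S j, ∑ z : S k,
        τ (Function.update (Function.update (Function.update s i x) j y) k z))
          = ∑ y : S j, ∑ x : S i, ∑ z : S k,
        τ (Function.update (Function.update (Function.update s i x) j y) k z) :=
      Finset.sum_comm
    rw [eσ, eτ]
    refine Finset.sum_congr rfl fun y _ => ?_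
    have h := (hmarg (Function.update s j y)).symm
    simp only [Function.update_comm hij.symm] at h
    exact h
  have hmτ' : ∀ s : ∀ l, S l, (∑ z : S k, ∑ x : S i, ∑ y : S j,
      τ (Function.update (Function.update (Function.update s i x) j y) k z))
        = mden i j k σ s := by
    intro s
    rw [sum_rot]
    exact hmτ s
  -- the inner triple sum of mix
  have key_inner : ∀ s : ∀ l, S l,
      (∑ x : S i, ∑ y : S j, ∑ z : S k, mix i j k σ τ
        (Function.update (Function.update (Function.update s i x) j y) k z))
        = mden i j k σ s := by
    intro s
    have hMs := (hM s).ne'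
    calc (∑ x : S i, ∑ y : S j, ∑ z : S k, mix i j k σ τ
          (Function.update (Function.update (Function.update s i x) j y) k z))
        = ∑ x : S i, ∑ y : S j, ∑ z : S k,
            (∑ z' : S k, σ (Function.update (Function.update (Function.update s i x) j y) k z')) *
            (∑ x' : S i, ∑ y' : S j,
              τ (Function.update (Function.update (Function.update s i x') j y') k z)) /
            mden i j k σ s :=
          Finset.sum_congr rfl fun x _ => Finset.sum_congr rfl fun y _ =>
            Finset.sum_congr rfl fun z _ => mix_upd3 σ τ hij hjk hik s x y z
      _ = ∑ x : S i, ∑ y : S j,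
            (∑ z' : S k, σ (Function.update (Function.update (Function.update s i x) j y) k z')) *
            mden i j k σ s / mden i j k σ s := by
          refine Finset.sum_congr rfl fun x _ => Finset.sum_congr rfl fun y _ => ?_
          rw [← Finset.sum_div, ← Finset.mul_sum, hmτ' s]
      _ = ∑ x : S i, ∑ y : S j, ∑ z' : S k,
            σ (Function.update (Function.update (Function.update s i x) j y) k z') := by
          refine Finset.sum_congr rfl fun x _ => Finset.sum_congr rfl fun y _ => ?_
          rw [mul_div_assoc, div_self hMs, mul_one]
      _ = mden i j k σ s := rfl
  -- mix is a full-support profile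
  have hmixpos : ∀ s, 0 < mix i j k σ τ s := by
    intro s
    refine div_pos (mul_pos ?_ ?_) (hM s)
    · exact Finset.sum_pos (fun z _ => hσ.1 _) (huniv k)
    · exact Finset.sum_pos (fun x _ => Finset.sum_pos (fun y _ => hτ.1 _) (huniv j)) (huniv i)
  have hNpos : (0:ℝ) < (Fintype.card (S i) : ℝ) * (Fintype.card (S j) : ℝ) *
      (Fintype.card (S k) : ℝ) := by
    have hc : ∀ l : ι, (0:ℝ) < (Fintype.card (S l) : ℝ) := fun l =>
      Nat.cast_pos.mpr (lt_of_lt_of_le (by norm_num) (hcard l))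
    exact mul_pos (mul_pos (hc i) (hc j)) (hc k)
  have hmixsum : ∑ s, mix i j k σ τ s = 1 := by
    refine mul_left_cancel₀ hNpos.ne' ?_
    calc ((Fintype.card (S i) : ℝ) * (Fintype.card (S j) : ℝ) * (Fintype.card (S k) : ℝ)) *
          ∑ s, mix i j k σ τ s
        = ∑ s : ∀ l, S l, ∑ x : S i, ∑ y : S j, ∑ z : S k, mix i j k σ τ
            (Function.update (Function.update (Function.update s i x) j y) k z) :=
          (sum3_count i j k (mix i j k σ τ)).symm
      _ = ∑ s : ∀ l, S l, mden i j k σ s :=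
          Finset.sum_congr rfl fun s _ => key_inner s
      _ = ∑ s : ∀ l, S l, ∑ x : S i, ∑ y : S j, ∑ z : S k,
            σ (Function.update (Function.update (Function.update s i x) j y) k z) := rfl
      _ = ((Fintype.card (S i) : ℝ) * (Fintype.card (S j) : ℝ) * (Fintype.card (S k) : ℝ)) *
            ∑ s, σ s := sum3_count i j k σ
      _ = ((Fintype.card (S i) : ℝ) * (Fintype.card (S j) : ℝ) * (Fintype.card (S k) : ℝ)) * 1 := by
          rw [hσ.2]
  have hmixFS : FullSupport (mix i j k σ τ) := ⟨hmixpos, hmixsum⟩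
  -- same marginal as σ off (j,k)
  have hsmJK : SameMarginal j k σ (mix i j k σ τ) := by
    intro s
    have hMs := (hM s).ne'
    symm
    calc (∑ y : S j, ∑ z : S k, mix i j k σ τ (Function.update (Function.update s j y) k z))
        = ∑ y : S j, ∑ z : S k,
            (∑ z' : S k, σ (Function.update (Function.update s j y) k z')) *
            (∑ x' : S i, ∑ y' : S j,
              τ (Function.update (Function.update (Function.update s i x') j y') k z)) /
            mden i j k σ s :=
          Finset.sum_congr rfl fun y _ => Finset.sum_congr rfl fun z _ =>
            mix_updJK σ τ hij hjk hik s y z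
      _ = ∑ y : S j,
            (∑ z' : S k, σ (Function.update (Function.update s j y) k z')) *
            mden i j k σ s / mden i j k σ s := by
          refine Finset.sum_congr rfl fun y _ => ?_
          rw [← Finset.sum_div, ← Finset.mul_sum, hmτ' s]
      _ = ∑ y : S j, ∑ z' : S k, σ (Function.update (Function.update s j y) k z') := by
          refine Finset.sum_congr rfl fun y _ => ?_
          rw [mul_div_assoc, div_self hMs, mul_one]
  -- same marginal as τ off (i,j)
  have hsmIJ : SameMarginal i j (mix i j k σ τ) τ := by
    intro s
    have hMs := (hM s).ne'
    calc (∑ x : S i, ∑ y : S j, mix i j k σ τ (Function.update (Function.update s i x) j y))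
        = ∑ x : S i, ∑ y : S j,
            (∑ z' : S k, σ (Function.update (Function.update (Function.update s i x) j y) k z')) *
            (∑ x' : S i, ∑ y' : S j, τ (Function.update (Function.update s i x') j y')) /
            mden i j k σ s :=
          Finset.sum_congr rfl fun x _ => Finset.sum_congr rfl fun y _ =>
            mix_updIJ σ τ hij hjk hik s x y
      _ = (∑ x : S i, ∑ y : S j, ∑ z' : S k,
            σ (Function.update (Function.update (Function.update s i x) j y) k z')) *
            (∑ x' : S i, ∑ y' : S j, τ (Function.update (Function.update s i x') j y')) /
            mden i j k σ s := by
          conv_rhs => rw [Finset.sum_mul, Finset.sum_div]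
          refine Finset.sum_congr rfl fun x _ => ?_
          conv_rhs => rw [Finset.sum_mul, Finset.sum_div]
      _ = mden i j k σ s *
            (∑ x' : S i, ∑ y' : S j, τ (Function.update (Function.update s i x') j y')) /
            mden i j k σ s := rfl
      _ = ∑ x' : S i, ∑ y' : S j, τ (Function.update (Function.update s i x') j y') := by
          rw [mul_comm, mul_div_assoc, div_self hMs, mul_one]
  -- sj is weakly optimal for j against mix
  have hjweak : ∀ sj' : S j, expPay U j sj' (mix i j k σ τ) ≤ expPay U j sj (mix i j k σ τ) := by
    intro sj'
    by_cases h : sj' = sj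
    · subst h; exact le_refl _
    · exact (h2 σ hσ hk (mix i j k σ τ) hmixFS hsmJK sj' h).le
  exact h1 (mix i j k σ τ) hmixFS hjweak τ hτ hsmIJ si' hne

end
end

section
/- In a game factorable for player i, if an information set h* of another player j belongs to F_i[s_i] for some strategy s_i of i, and j has at least two actions at h*, then h* is on the path of play whenever i plays s_i, regardless of the other players' strategy profile. -/
open scoped Classical

noncomputable section

variable {ι H : Type} [Fintype ι] [DecidableEq ι] [Fintype H] [DecidableEq H]

/-- Combine a strategy of player `i` (actions at `i`'s information sets) with a profile
of the opponents' actions into a full action profile. -/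
def combine (owner : H → ι) (A : H → Type) (i : ι)
    (si : ∀ h : {h // owner h = i}, A h) (so : ∀ h : {h // owner h ≠ i}, A h) :
    ∀ h, A h :=
  fun h => if hh : owner h = i then si ⟨h, hh⟩ else so ⟨h, hh⟩

/-- Player `i`'s payoff is independent of the information set `hstar`. -/
def PayoffIndep {A : H → Type} (payoff : ι → (∀ h, A h) → ℝ) (i : ι) (hstar : H) : Prop :=
  ∀ (a : ∀ h, A h) (x x' : A hstar),
    payoff i (Function.update a hstar x) = payoff i (Function.update a hstar x')

/-- Lemma: in a game factorable for `i`, if `h*` is an information set of another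
player `j` with at least two actions and `h* ∈ F_i[s_i]`, then `h*` is on the path of
play whenever `i` plays `s_i`, for any profile of the others' play. -/
theorem relevant_set_always_on_path
    (owner : H → ι) (A : H → Type) [∀ h, Fintype (A h)] [∀ h, Nonempty (A h)]
    (onPath : (∀ h, A h) → H → Prop) (payoff : ι → (∀ h, A h) → ℝ)
    -- changing the action at an off-path information set changes neither payoffs nor the path
    (hoffPay : ∀ (a : ∀ h, A h) (h : H) (x : A h), ¬ onPath a h →
      ∀ i', payoff i' (Function.update a h x) = payoff i' a)
    (hoffPath : ∀ (a : ∀ h, A h) (h : H) (x : A h), ¬ onPath a h →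
      ∀ h', onPath (Function.update a h x) h' ↔ onPath a h')
    -- each player moves at most once along any path of play
    (honce : ∀ (a : ∀ h, A h) (h h' : H), onPath a h → onPath a h' →
      owner h = owner h' → h = h')
    (i : ι)
    -- the game is factorable for i, with s_i-relevant information sets F s_i
    (F : (∀ h : {h // owner h = i}, A h) → Finset H)
    (hFowner : ∀ si h, h ∈ F si → owner h ≠ i)
    (hFmeas : ∀ si (so so' : ∀ h : {h // owner h ≠ i}, A h),
      payoff i (combine owner A i si so) = payoff i (combine owner A i si so') ↔
        ∀ (h : H), h ∈ F si → ∀ (hne : owner h ≠ i), so ⟨h, hne⟩ = so' ⟨h, hne⟩)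
    (hFdisj : ∀ si si', si ≠ si' → Disjoint (F si) (F si'))
    -- h* is an information set of another player j with at least two actions
    (hstar : H) (j : ι) (hji : j ≠ i) (hownj : owner hstar = j)
    (hcard : 2 ≤ Fintype.card (A hstar))
    (si : ∀ h : {h // owner h = i}, A h) (hmem : hstar ∈ F si) :
    ∀ so : ∀ h : {h // owner h ≠ i}, A h, onPath (combine owner A i si so) hstar := by
  intro so
  by_contra hnot
  have hne : owner hstar ≠ i := hownj ▸ hji
  -- pick an action different from so ⟨hstar, hne⟩
  obtain ⟨x', hx'⟩ := Fintype.exists_ne_of_one_lt_card (by omega : 1 < Fintype.card (A hstar))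
      (so ⟨hstar, hne⟩)
  set so' : ∀ h : {h // owner h ≠ i}, A h := Function.update so ⟨hstar, hne⟩ x' with hso'
  have hcomb : combine owner A i si so' =
      Function.update (combine owner A i si so) hstar x' := by
    funext h
    by_cases hh : h = hstar
    · subst hh
      simp [combine, hne, hso', Function.update]
    · simp [combine, Function.update, hh, hso']
  have hpay : payoff i (combine owner A i si so) = payoff i (combine owner A i si so') := by
    rw [hcomb, hoffPay _ _ _ hnot]
  have := (hFmeas si so so').mp hpay hstar hmem hne
  rw [hso'] at this
  simp [Function.update] at this
  exact hx' this.symm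

end
end

section
/- In a game factorable for player i, if i's payoff is not independent of the information set h* of player j ≠ i, then (i) j has at least two actions at h*, and (ii) there exists a strategy s_i of i with h* ∈ F_i[s_i]. -/
open scoped Classical

noncomputable section

variable {ι H : Type} [Fintype ι] [DecidableEq ι] [Fintype H] [DecidableEq H]

/-- Lemma: in a game factorable for `i`, if `i`'s payoff is not independent of the
information set `h*` of a player `j ≠ i`, then (i) `j` has at least two actions at
`h*`, and (ii) `h* ∈ F_i[s_i]` for some strategy `s_i` of `i`. -/
theorem payoff_dependence_implies_relevant
    (owner : H → ι) (A : H → Type) [∀ h, Fintype (A h)] [∀ h, Nonempty (A h)]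
    (onPath : (∀ h, A h) → H → Prop) (payoff : ι → (∀ h, A h) → ℝ)
    (hoffPay : ∀ (a : ∀ h, A h) (h : H) (x : A h), ¬ onPath a h →
      ∀ i', payoff i' (Function.update a h x) = payoff i' a)
    (hoffPath : ∀ (a : ∀ h, A h) (h : H) (x : A h), ¬ onPath a h →
      ∀ h', onPath (Function.update a h x) h' ↔ onPath a h')
    (honce : ∀ (a : ∀ h, A h) (h h' : H), onPath a h → onPath a h' →
      owner h = owner h' → h = h')
    (i : ι)
    -- the game is factorable for i, with s_i-relevant information sets F s_i
    (F : (∀ h : {h // owner h = i}, A h) → Finset H)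
    (hFowner : ∀ si h, h ∈ F si → owner h ≠ i)
    (hFmeas : ∀ si (so so' : ∀ h : {h // owner h ≠ i}, A h),
      payoff i (combine owner A i si so) = payoff i (combine owner A i si so') ↔
        ∀ (h : H), h ∈ F si → ∀ (hne : owner h ≠ i), so ⟨h, hne⟩ = so' ⟨h, hne⟩)
    (hFdisj : ∀ si si', si ≠ si' → Disjoint (F si) (F si'))
    -- h* is an information set of a player j ≠ i, and i's payoff depends on it
    (hstar : H) (j : ι) (hji : j ≠ i) (hownj : owner hstar = j)
    (hdep : ¬ PayoffIndep payoff i hstar) :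
    2 ≤ Fintype.card (A hstar) ∧
    ∃ si : ∀ h : {h // owner h = i}, A h, hstar ∈ F si := by
  rw [PayoffIndep] at hdep
  push_neg at hdep
  obtain ⟨a, x, x', hne⟩ := hdep
  constructor
  · by_contra hlt
    push_neg at hlt
    have h1 : Fintype.card (A hstar) ≤ 1 := by omega
    exact hne (by rw [Fintype.card_le_one_iff.mp h1 x x'])
  · have hsne : owner hstar ≠ i := by rw [hownj]; exact hji
    set si : ∀ h : {h // owner h = i}, A h := fun h => a h.1 with hsi
    refine ⟨si, ?_⟩
    set a₁ := Function.update a hstar x with ha₁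
    set a₂ := Function.update a hstar x' with ha₂
    set so : ∀ h : {h // owner h ≠ i}, A h := fun h => a₁ h.1 with hso
    set so' : ∀ h : {h // owner h ≠ i}, A h := fun h => a₂ h.1 with hso'
    have hc1 : combine owner A i si so = a₁ := by
      funext h
      unfold combine
      split_ifs with hh
      · show a h = a₁ h
        rw [ha₁, Function.update_of_ne]
        intro heq; rw [heq] at hh; exact hsne hh
      · rfl
    have hc2 : combine owner A i si so' = a₂ := by
      funext h
      unfold combine
      split_ifs with hh
      · show a h = a₂ h
        rw [ha₂, Function.update_of_ne]
        intro heq; rw [heq] at hh; exact hsne hh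
      · rfl
    have hpay : ¬ payoff i (combine owner A i si so) = payoff i (combine owner A i si so') := by
      rw [hc1, hc2]; exact hne
    have hd := (hFmeas si so so').not.mp hpay
    push_neg at hd
    obtain ⟨h, hF, hne2, hdiff⟩ := hd
    by_cases heq : h = hstar
    · rw [← heq]; exact hF
    · exfalso
      apply hdiff
      show a₁ h = a₂ h
      rw [ha₁, ha₂, Function.update_of_ne heq, Function.update_of_ne heq]

end
end

section
/- In a game factorable for player i, if i's payoff is not independent of information set h*, then for any strategy profile, either h* is on the path of play, or player i has a deviation at a single one of her information sets that puts h* onto the path of play. -/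
open scoped Classical

noncomputable section

variable {ι H : Type} [Fintype ι] [DecidableEq ι] [Fintype H] [DecidableEq H]

set_option linter.unusedSectionVars false in
lemma combine_update_opp (owner : H → ι) (A : H → Type) (i : ι)
    (si : ∀ h : {h // owner h = i}, A h) (so : ∀ h : {h // owner h ≠ i}, A h)
    (h0 : H) (hne : owner h0 ≠ i) (x : A h0) :
    combine owner A i si (Function.update so ⟨h0, hne⟩ x) =
      Function.update (combine owner A i si so) h0 x := by
  funext h
  by_cases hh : owner h = i
  · have hne' : h ≠ h0 := by rintro rfl; exact hne hh
    simp [combine, hh, Function.update_of_ne hne']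
  · by_cases he : h = h0
    · subst he
      simp [combine, hh]
    · have hsub : (⟨h, hh⟩ : {h // owner h ≠ i}) ≠ ⟨h0, hne⟩ := by
        simp [Subtype.ext_iff, he]
      simp [combine, hh, Function.update_of_ne he, Function.update_of_ne hsub]

/-- Proposition: in a game factorable for `i`, if `i`'s payoff is not independent of
`h*`, then for any strategy profile either `h*` is on the path of play, or `i` has a
deviation at a single one of her information sets that puts `h*` onto the path. -/
theorem one_step_deviation_reaches
    (owner : H → ι) (A : H → Type) [∀ h, Fintype (A h)] [∀ h, Nonempty (A h)]
    (onPath : (∀ h, A h) → H → Prop) (payoff : ι → (∀ h, A h) → ℝ)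
    (hoffPay : ∀ (a : ∀ h, A h) (h : H) (x : A h), ¬ onPath a h →
      ∀ i', payoff i' (Function.update a h x) = payoff i' a)
    (hoffPath : ∀ (a : ∀ h, A h) (h : H) (x : A h), ¬ onPath a h →
      ∀ h', onPath (Function.update a h x) h' ↔ onPath a h')
    (honce : ∀ (a : ∀ h, A h) (h h' : H), onPath a h → onPath a h' →
      owner h = owner h' → h = h')
    (i : ι)
    -- the game is factorable for i, with s_i-relevant information sets F s_i
    (F : (∀ h : {h // owner h = i}, A h) → Finset H)
    (hFowner : ∀ si h, h ∈ F si → owner h ≠ i)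
    (hFmeas : ∀ si (so so' : ∀ h : {h // owner h ≠ i}, A h),
      payoff i (combine owner A i si so) = payoff i (combine owner A i si so') ↔
        ∀ (h : H), h ∈ F si → ∀ (hne : owner h ≠ i), so ⟨h, hne⟩ = so' ⟨h, hne⟩)
    (hFdisj : ∀ si si', si ≠ si' → Disjoint (F si) (F si'))
    -- h* is an information set of another player, and i's payoff depends on it
    (hstar : H) (hown : owner hstar ≠ i)
    (hdep : ¬ PayoffIndep payoff i hstar) :
    ∀ a : ∀ h, A h, onPath a hstar ∨
      ∃ (h : H) (x : A h), owner h = i ∧ onPath (Function.update a h x) hstar := by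
  -- unpack payoff dependence
  unfold PayoffIndep at hdep
  push_neg at hdep
  obtain ⟨a0, x0, x0', hne00⟩ := hdep
  have hx00 : x0 ≠ x0' := by rintro rfl; exact hne00 rfl
  -- Step 1: there is a strategy si with hstar ∈ F si
  have step1 : ∃ si, hstar ∈ F si := by
    set si : ∀ h : {h // owner h = i}, A h := fun h => a0 h.1 with hsi
    set so : ∀ h : {h // owner h ≠ i}, A h := fun h => a0 h.1 with hso
    have hcomb : combine owner A i si so = a0 := by
      funext h; by_cases hh : owner h = i <;> simp [combine, hh, hsi, hso]
    have h1 : Function.update a0 hstar x0 =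
        combine owner A i si (Function.update so ⟨hstar, hown⟩ x0) := by
      rw [combine_update_opp, hcomb]
    have h2 : Function.update a0 hstar x0' =
        combine owner A i si (Function.update so ⟨hstar, hown⟩ x0') := by
      rw [combine_update_opp, hcomb]
    rw [h1, h2] at hne00
    have := (hFmeas si _ _).not.mp hne00
    push_neg at this
    obtain ⟨h, hmem, hne, hdiff⟩ := this
    by_cases he : h = hstar
    · subst he; exact ⟨si, hmem⟩
    · exfalso
      have hsub : (⟨h, hne⟩ : {h // owner h ≠ i}) ≠ ⟨hstar, hown⟩ := by
        simp [Subtype.ext_iff, he]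
      simp [Function.update_of_ne hsub] at hdiff
  obtain ⟨si, hmemF⟩ := step1
  -- Step 2: whenever i plays si, hstar is on the path
  have step2 : ∀ so : ∀ h : {h // owner h ≠ i}, A h,
      onPath (combine owner A i si so) hstar := by
    intro so
    by_contra hnot
    -- pick an action different from so ⟨hstar, hown⟩
    obtain ⟨y, hy⟩ : ∃ y : A hstar, y ≠ so ⟨hstar, hown⟩ := by
      by_cases hx : x0 = so ⟨hstar, hown⟩
      · exact ⟨x0', by rw [← hx]; exact fun h => hx00 h.symm⟩
      · exact ⟨x0, hx⟩
    have hpay : payoff i (combine owner A i si (Function.update so ⟨hstar, hown⟩ y)) =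
        payoff i (combine owner A i si so) := by
      rw [combine_update_opp]
      exact hoffPay _ hstar y hnot i
    have := ((hFmeas si _ _).mp hpay) hstar hmemF hown
    simp [Function.update_self] at this
    exact hy this
  -- Main argument
  intro a
  set so : ∀ h : {h // owner h ≠ i}, A h := fun h => a h.1 with hso
  set b : ∀ h, A h := combine owner A i si so with hb
  have hbstar : onPath b hstar := step2 so
  have hba : ∀ h, owner h ≠ i → b h = a h := by
    intro h hh; simp [hb, combine, hh, hso]
  -- changing i's actions at sets off the path of b does not change the path
  have key : ∀ T : Finset H, (∀ t ∈ T, ¬ onPath b t) →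
      ∀ h', onPath (fun h => if h ∈ T then a h else b h) h' ↔ onPath b h' := by
    intro T
    induction T using Finset.induction_on with
    | empty => intro _ h'; simp
    | @insert t T htT ih =>
      intro hoff h'
      have hTE : (fun h => if h ∈ insert t T then a h else b h) =
          Function.update (fun h => if h ∈ T then a h else b h) t (a t) := by
        funext h
        by_cases he : h = t
        · subst he; simp [htT]
        · simp [Function.update_of_ne he, Finset.mem_insert, he]
      have ihT := ih (fun u hu => hoff u (Finset.mem_insert_of_mem hu))
      have hnot : ¬ onPath (fun h => if h ∈ T then a h else b h) t := by
        rw [ihT t]; exact hoff t (Finset.mem_insert_self t T)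
      rw [hTE, hoffPath _ t (a t) hnot h', ihT h']
  set T0 : Finset H := Finset.univ.filter (fun h => owner h = i ∧ ¬ onPath b h) with hT0
  set d : ∀ h, A h := fun h => if h ∈ T0 then a h else b h with hd
  have hdpath : ∀ h', onPath d h' ↔ onPath b h' := by
    apply key; intro t ht
    exact ((Finset.mem_filter.mp ht).2).2
  have hdstar : onPath d hstar := (hdpath hstar).mpr hbstar
  by_cases hex : ∃ h0, owner h0 = i ∧ onPath b h0
  · obtain ⟨h0, hh0, hp0⟩ := hex
    right
    refine ⟨h0, b h0, hh0, ?_⟩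
    have hda : Function.update a h0 (b h0) = d := by
      funext h
      by_cases he : h = h0
      · subst he
        have : h ∉ T0 := by simp [hT0, hp0]
        simp [hd, this]
      · rw [Function.update_of_ne he]
        by_cases hm : h ∈ T0
        · simp [hd, hm]
        · by_cases hh : owner h = i
          · have hp : onPath b h := by
              by_contra hc
              exact hm (Finset.mem_filter.mpr ⟨Finset.mem_univ h, hh, hc⟩)
            exact absurd (honce b h h0 hp hp0 (hh.trans hh0.symm)) he
          · simp [hd, hm, hba h hh]
    rw [hda]; exact hdstar
  · left
    push_neg at hex
    have hda : d = a := by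
      funext h
      by_cases hm : h ∈ T0
      · simp [hd, hm]
      · by_cases hh : owner h = i
        · have hp : onPath b h := by
            by_contra hc
            exact hm (Finset.mem_filter.mpr ⟨Finset.mem_univ h, hh, hc⟩)
          exact absurd hp (hex h hh)
        · simp [hd, hm, hba h hh]
    rw [← hda]; exact hdstar


end
end

section
/- Every binary participation game for player i is factorable for i, with F_i[In] equal to the common collection of others' information sets passed through on paths where i plays In, and F_i[Out] = ∅. -/
open scoped Classical

noncomputable section

variable {ι H : Type} [Fintype ι] [DecidableEq ι] [Fintype H] [DecidableEq H]

/-- Every binary participation game for `i` is factorable for `i`, with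
`F_i[In]` the common collection of others' information sets passed through on paths
where `i` plays `In`, and `F_i[Out] = ∅`. -/
theorem binary_participation_factorable
    (owner : H → ι) (A : H → Type) [∀ h, Fintype (A h)] [∀ h, Nonempty (A h)]
    (onPath : (∀ h, A h) → H → Prop) (payoff : ι → (∀ h, A h) → ℝ)
    -- maintained assumptions: off-path irrelevance and one move per path
    (hoffPay : ∀ (a : ∀ h, A h) (h : H) (x : A h), ¬ onPath a h →
      ∀ i', payoff i' (Function.update a h x) = payoff i' a)
    (hoffPath : ∀ (a : ∀ h, A h) (h : H) (x : A h), ¬ onPath a h →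
      ∀ h', onPath (Function.update a h x) h' ↔ onPath a h')
    (honce : ∀ (a : ∀ h, A h) (h h' : H), onPath a h → onPath a h' →
      owner h = owner h' → h = h')
    (i : ι)
    -- (1) i has a unique information set h0, with exactly the two actions In and Out
    (h0 : H) (hown0 : owner h0 = i)
    (huniq : ∀ h, owner h = i → h = h0)
    (aIn aOut : A h0) (hInOut : aIn ≠ aOut)
    (htwo : ∀ x : A h0, x = aIn ∨ x = aOut)
    -- (2) all paths of play pass through i's information set
    (hpass : ∀ a : ∀ h, A h, onPath a h0)
    -- (3) all paths where i plays In pass through the same information sets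
    (hsame : ∀ a a' : ∀ h, A h, a h0 = aIn → a' h0 = aIn →
      ∀ h, onPath a h ↔ onPath a' h)
    -- (4) all terminal vertices where i plays Out give i the same payoff
    (houtpay : ∀ a a' : ∀ h, A h, a h0 = aOut → a' h0 = aOut →
      payoff i a = payoff i a')
    -- (5) terminal vertices where i plays In all have different payoffs for i
    (hinpay : ∀ a a' : ∀ h, A h, a h0 = aIn → a' h0 = aIn →
      payoff i a = payoff i a' → ∀ h, onPath a h → a h = a' h)
    -- the strategies of i playing In and Out at her unique information set
    (sIn sOut : ∀ h : {h // owner h = i}, A h)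
    (hsIn : ∀ h : {h // owner h = i}, cast (congrArg A (huniq h.1 h.2)) (sIn h) = aIn)
    (hsOut : ∀ h : {h // owner h = i}, cast (congrArg A (huniq h.1 h.2)) (sOut h) = aOut) :
    ∃ F : (∀ h : {h // owner h = i}, A h) → Finset H,
      -- factorability for i
      (∀ si h, h ∈ F si → owner h ≠ i) ∧
      (∀ si (so so' : ∀ h : {h // owner h ≠ i}, A h),
        payoff i (combine owner A i si so) = payoff i (combine owner A i si so') ↔
          ∀ (h : H), h ∈ F si → ∀ (hne : owner h ≠ i), so ⟨h, hne⟩ = so' ⟨h, hne⟩) ∧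
      (∀ si si', si ≠ si' → Disjoint (F si) (F si')) ∧
      -- F[In] is the common collection of others' information sets on In-paths
      (∀ h : H, h ∈ F sIn ↔
        (owner h ≠ i ∧ ∀ a : ∀ h', A h', a h0 = aIn → onPath a h)) ∧
      -- F[Out] is empty
      F sOut = ∅ := by
  classical
  -- basic facts about sIn, sOut at h0
  have hIn0 : sIn ⟨h0, hown0⟩ = aIn := hsIn ⟨h0, hown0⟩
  have hOut0 : sOut ⟨h0, hown0⟩ = aOut := hsOut ⟨h0, hown0⟩
  -- any two strategies agreeing at h0 are equal
  have hsub : ∀ f g : (∀ h : {h // owner h = i}, A h),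
      f ⟨h0, hown0⟩ = g ⟨h0, hown0⟩ → f = g := by
    intro f g hfg
    funext x
    obtain ⟨h, hh⟩ := x
    have e := huniq h hh
    subst e
    exact hfg
  have hdich : ∀ si : (∀ h : {h // owner h = i}, A h), si = sIn ∨ si = sOut := by
    intro si
    rcases htwo (si ⟨h0, hown0⟩) with h1 | h1
    · exact Or.inl (hsub _ _ (h1.trans hIn0.symm))
    · exact Or.inr (hsub _ _ (h1.trans hOut0.symm))
  have hInOutS : sIn ≠ sOut := by
    intro e
    exact hInOut (hIn0 ▸ e ▸ hOut0)
  -- value of combine at h0 / at h with owner h ≠ i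
  have hcomb0 : ∀ (si : ∀ h : {h // owner h = i}, A h)
      (so : ∀ h : {h // owner h ≠ i}, A h),
      combine owner A i si so h0 = si ⟨h0, hown0⟩ := by
    intro si so
    exact dif_pos hown0
  have hcombo : ∀ (si : ∀ h : {h // owner h = i}, A h)
      (so : ∀ h : {h // owner h ≠ i}, A h) (h : H) (hne : owner h ≠ i),
      combine owner A i si so h = so ⟨h, hne⟩ := by
    intro si so h hne
    exact dif_neg hne
  -- key lemma: two In-profiles agreeing on-path give equal payoff
  have key : ∀ n (a a' : ∀ h, A h), a h0 = aIn → a' h0 = aIn →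
      (∀ h, onPath a h → a h = a' h) →
      (Finset.univ.filter fun h => a h ≠ a' h).card ≤ n →
      payoff i a = payoff i a' := by
    intro n
    induction n with
    | zero =>
      intro a a' _ _ _ hcard
      have : a = a' := by
        funext h
        by_contra hne
        have hmem : h ∈ Finset.univ.filter fun h => a h ≠ a' h := by
          simp [hne]
        have := Finset.card_pos.mpr ⟨h, hmem⟩
        omega
      rw [this]
    | succ n ih =>
      intro a a' ha ha' hagree hcard
      by_cases hall : ∀ h, a h = a' h
      · rw [funext hall]
      · push_neg at hall
        obtain ⟨h, hne⟩ := hall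
        have hnp : ¬ onPath a h := fun hp => hne (hagree h hp)
        have hnp' : ¬ onPath a' h := fun hp => hnp ((hsame a a' ha ha' h).mpr hp)
        have hh0 : h ≠ h0 := fun e => hnp (e ▸ hpass a)
        set a'' := Function.update a' h (a h) with ha''def
        have hpay : payoff i a'' = payoff i a' := hoffPay a' h (a h) hnp' i
        have ha'' : a'' h0 = aIn := by
          rw [ha''def, Function.update_of_ne (Ne.symm hh0)]
          exact ha'
        have ha''h : a'' h = a h := by rw [ha''def, Function.update_self]
        have ha''ne : ∀ h', h' ≠ h → a'' h' = a' h' := by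
          intro h' e
          rw [ha''def, Function.update_of_ne e]
        have hagree'' : ∀ h', onPath a h' → a h' = a'' h' := by
          intro h' hp
          by_cases e : h' = h
          · subst e; exact ha''h.symm
          · rw [ha''ne h' e]; exact hagree h' hp
        have hsubset : (Finset.univ.filter fun h' => a h' ≠ a'' h') ⊆
            (Finset.univ.filter fun h' => a h' ≠ a' h').erase h := by
          intro h' hmem
          simp only [Finset.mem_filter, Finset.mem_univ, true_and] at hmem
          have e : h' ≠ h := by
            intro e; subst e; exact hmem ha''h.symm
          refine Finset.mem_erase.mpr ⟨e, ?_⟩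
          simp only [Finset.mem_filter, Finset.mem_univ, true_and]
          intro eq
          exact hmem (by rw [ha''ne h' e]; exact eq)
        have hmemh : h ∈ Finset.univ.filter fun h' => a h' ≠ a' h' := by simp [hne]
        have hcard'' : (Finset.univ.filter fun h' => a h' ≠ a'' h').card ≤ n := by
          have h1 := Finset.card_le_card hsubset
          have h2 := Finset.card_erase_of_mem hmemh
          have h3 := Finset.card_pos.mpr ⟨h, hmemh⟩
          omega
        calc payoff i a = payoff i a'' := ih a a'' ha ha'' hagree'' hcard''
          _ = payoff i a' := hpay
  -- the common on-path collection for In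
  set S : Finset H :=
    Finset.univ.filter (fun h => owner h ≠ i ∧ ∀ a : ∀ h', A h', a h0 = aIn → onPath a h)
    with hSdef
  refine ⟨fun si => if si = sIn then S else ∅, ?_, ?_, ?_, ?_, ?_⟩
  · intro si h hmem
    dsimp only at hmem
    split at hmem
    · rw [hSdef] at hmem
      simp only [Finset.mem_filter] at hmem
      exact hmem.2.1
    · simp at hmem
  · intro si so so'
    dsimp only
    rcases hdich si with e | e <;> subst e
    · -- si = sIn
      rw [if_pos rfl]
      have ha : combine owner A i si so h0 = aIn := by rw [hcomb0]; exact hIn0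
      have ha' : combine owner A i si so' h0 = aIn := by rw [hcomb0]; exact hIn0
      constructor
      · intro heq h hmem hne
        rw [hSdef] at hmem
        simp only [Finset.mem_filter, Finset.mem_univ, true_and] at hmem
        have hp : onPath (combine owner A i si so) h := hmem.2 _ ha
        have := hinpay _ _ ha ha' heq h hp
        rwa [hcombo si so h hne, hcombo si so' h hne] at this
      · intro hag
        apply key (Finset.univ.filter fun h =>
            combine owner A i si so h ≠ combine owner A i si so' h).card
            _ _ ha ha' _ le_rfl
        intro h hp
        by_cases hh : owner h = i
        · have e := huniq h hh
          subst e
          rw [hcomb0, hcomb0]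
        · have hmem : h ∈ S := by
            rw [hSdef]
            simp only [Finset.mem_filter, Finset.mem_univ, true_and]
            refine ⟨hh, fun b hb => ?_⟩
            exact (hsame _ b ha hb h).mp hp
          rw [hcombo si so h hh, hcombo si so' h hh]
          exact hag h hmem hh
    · -- si = sOut
      have hne' : si ≠ sIn := fun e => hInOutS e.symm
      rw [if_neg hne']
      have ha : combine owner A i si so h0 = aOut := by rw [hcomb0]; exact hOut0
      have ha' : combine owner A i si so' h0 = aOut := by rw [hcomb0]; exact hOut0
      simp only [Finset.notMem_empty, false_implies, implies_true, iff_true]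
      exact houtpay _ _ ha ha'
  · intro si si' hne
    dsimp only
    by_cases e : si = sIn
    · have h' : si' ≠ sIn := fun e' => hne (e.trans e'.symm)
      rw [if_neg h']
      exact Finset.disjoint_empty_right _
    · rw [if_neg e]
      exact Finset.disjoint_empty_left _
  · intro h
    dsimp only
    rw [if_pos rfl, hSdef]
    simp [Finset.mem_filter]
  · dsimp only
    have hne' : sOut ≠ sIn := fun e => hInOutS e.symm
    rw [if_neg hne']

end
end

section
/- Induced responses from index policies respect compatibility: suppose Γ is isomorphically factorable for players i and j via bijection φ with φ(s_i*) = s_j*, and index policy r_i is more compatible with s_i* than index policy r_j is with s_j*. Then for every response path 𝔄 and every k ≥ 1, if s_j* is played for the k-th time in the deterministic history y_j(𝔄, r_j) at some finite period, then for every s_i' ≠ s_i*, the number of times s_i' is played in y_i(𝔄, r_i) before s_i* is played for the k-th time is at most the number of times φ(s_i') is played in y_j(𝔄, r_j) before s_j* is played for the k-th time. -/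
open scoped Classical

noncomputable section

variable {ι H : Type} [Fintype ι] [DecidableEq ι] [Fintype H] [DecidableEq H]

section LearnDefs

variable (A : H → Type) [∀ h, Fintype (A h)] [∀ h, DecidableEq (A h)]

/-- The observation from one play of strategy `s`: the profile of opponents' actions at
the `s`-relevant information sets `F s`. -/
abbrev ObsG {T : Type} (F : T → Finset H) (s : T) : Type := ∀ h : {h // h ∈ F s}, A h.1

/-- A finite personal history: a list of (own strategy, observation) pairs,
most recent first. -/
abbrev HistG {T : Type} (F : T → Finset H) : Type := List (Σ s : T, ObsG A F s)

/-- The subhistory of the periods in which strategy `s` was played. -/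
def subH {T : Type} [DecidableEq T] (F : T → Finset H) (y : HistG A F) (s : T) :
    List (ObsG A F s) :=
  y.filterMap fun e => if h : e.1 = s then some (h ▸ e.2) else none

/-- `r` is an index policy for the indices `idx`: after every history it plays a
strategy whose index, computed from that strategy's subhistory, is weakly highest. -/
def IsIndexPolicy {T : Type} [DecidableEq T] (F : T → Finset H)
    (idx : ∀ s : T, List (ObsG A F s) → ℝ) (r : HistG A F → T) : Prop :=
  ∀ (y : HistG A F) (s' : T), idx s' (subH A F y s') ≤ idx (r y) (subH A F y (r y))

/-- Third-party equivalence of subhistories: same length, and the same sequence of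
observed actions of the players other than `i` and `j` at the common relevant
information sets. -/
def TPE (owner : H → ι) (i j : ι) {Ti Tj : Type}
    (Fi : Ti → Finset H) (Fj : Tj → Finset H) (si : Ti) (sj : Tj)
    (li : List (ObsG A Fi si)) (lj : List (ObsG A Fj sj)) : Prop :=
  li.length = lj.length ∧
    ∀ (t : ℕ) (hti : t < li.length) (htj : t < lj.length) (h : H),
      owner h ≠ i → owner h ≠ j → ∀ (hmi : h ∈ Fi si) (hmj : h ∈ Fj sj),
        (li[t]'hti) ⟨h, hmi⟩ = (lj[t]'htj) ⟨h, hmj⟩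

/-- The index policy `(idxi, ri)` is more compatible with `sistar` than `(idxj, rj)` is
with `sjstar`: after histories with third-party equivalent subhistories for the pairs
`(sistar, sjstar)` and `(si', φ si')`, if `sjstar` has weakly the highest index for `j`
then `si' ≠ sistar` does not have weakly the highest index for `i`. -/
def PolicyMoreCompat (owner : H → ι) (i j : ι) {Ti Tj : Type}
    [DecidableEq Ti] [DecidableEq Tj]
    (Fi : Ti → Finset H) (Fj : Tj → Finset H) (φ : Ti ≃ Tj)
    (idxi : ∀ s : Ti, List (ObsG A Fi s) → ℝ)
    (idxj : ∀ s : Tj, List (ObsG A Fj s) → ℝ)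
    (sistar : Ti) (sjstar : Tj) : Prop :=
  ∀ (yi : HistG A Fi) (yj : HistG A Fj) (si' : Ti), si' ≠ sistar →
    TPE A owner i j Fi Fj sistar sjstar (subH A Fi yi sistar) (subH A Fj yj sjstar) →
    TPE A owner i j Fi Fj si' (φ si') (subH A Fi yi si') (subH A Fj yj (φ si')) →
    (∀ sj' : Tj, idxj sj' (subH A Fj yj sj') ≤ idxj sjstar (subH A Fj yj sjstar)) →
    ¬ (∀ si'' : Ti, idxi si'' (subH A Fi yi si'') ≤ idxi si' (subH A Fi yi si'))

/-- The deterministic history induced by running the learning rule `r` against the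
response path `𝔄` for `t` periods: the `k`-th time `s` is played, the observation is
the `k`-th entry of `𝔄` at the `s`-relevant information sets. -/
def playHist {T : Type} [DecidableEq T] (F : T → Finset H) (r : HistG A F → T)
    (𝔄 : ℕ → ∀ h, A h) : ℕ → HistG A F
  | 0 => []
  | t + 1 =>
      let y := playHist F r 𝔄 t
      (⟨r y, fun h => 𝔄 (subH A F y (r y)).length h.1⟩ : Σ s : T, ObsG A F s) :: y

end LearnDefs

section Aux

set_option linter.unusedSectionVars false

variable (A : H → Type) [∀ h, Fintype (A h)] [∀ h, DecidableEq (A h)]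
variable {T : Type} [DecidableEq T] (F : T → Finset H) (r : HistG A F → T)
  (𝔄 : ℕ → ∀ h, A h)

lemma subH_playHist_zero (s : T) : subH A F (playHist A F r 𝔄 0) s = [] := rfl

lemma subH_playHist_succ (t : ℕ) (s : T) :
    subH A F (playHist A F r 𝔄 (t + 1)) s =
      if _ : r (playHist A F r 𝔄 t) = s then
        (fun hh : {h // h ∈ F s} =>
          𝔄 (subH A F (playHist A F r 𝔄 t) s).length hh.1) ::
          subH A F (playHist A F r 𝔄 t) s
      else subH A F (playHist A F r 𝔄 t) s := by
  by_cases hrs : r (playHist A F r 𝔄 t) = s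
  · rw [dif_pos hrs]
    subst hrs
    show List.filterMap _ (_ :: _) = _
    rw [List.filterMap_cons, dif_pos rfl]
    rfl
  · rw [dif_neg hrs]
    show List.filterMap _ (_ :: _) = _
    rw [List.filterMap_cons, dif_neg hrs]
    rfl


lemma subH_playHist_length_succ (t : ℕ) (s : T) :
    (subH A F (playHist A F r 𝔄 (t + 1)) s).length =
      (subH A F (playHist A F r 𝔄 t) s).length +
        (if r (playHist A F r 𝔄 t) = s then 1 else 0) := by
  by_cases hrs : r (playHist A F r 𝔄 t) = s
  · rw [subH_playHist_succ, dif_pos hrs, if_pos hrs, List.length_cons]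
  · rw [subH_playHist_succ, dif_neg hrs, if_neg hrs, Nat.add_zero]

lemma subH_playHist_length_mono (s : T) {t t' : ℕ} (h : t ≤ t') :
    (subH A F (playHist A F r 𝔄 t) s).length ≤
      (subH A F (playHist A F r 𝔄 t') s).length := by
  induction h with
  | refl => exact le_refl _
  | step h' ih =>
      refine le_trans ih ?_
      rw [subH_playHist_length_succ]
      split <;> omega

/-- Every entry of the induced subhistory is the corresponding entry of the
response path. -/
def GoodList (s : T) (l : List (ObsG A F s)) : Prop :=
  ∀ p (hp : p < l.length),
    l[p]'hp = fun hh : {h // h ∈ F s} => 𝔄 (l.length - 1 - p) hh.1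

lemma goodList_cons (s : T) (l : List (ObsG A F s)) (hl : GoodList A F 𝔄 s l) :
    GoodList A F 𝔄 s
      ((fun hh : {h // h ∈ F s} => 𝔄 l.length hh.1) :: l) := by
  intro p hp
  cases p with
  | zero => simp
  | succ p =>
      have hp' : p < l.length := by simpa using hp
      have h1 := hl p hp'
      have h2 : l.length - 1 - p =
          ((fun hh : {h // h ∈ F s} => 𝔄 l.length hh.1) :: l).length - 1 - (p + 1) := by
        simp only [List.length_cons]; omega
      rw [List.getElem_cons_succ, h1, h2]

lemma goodList_subH (s : T) (t : ℕ) :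
    GoodList A F 𝔄 s (subH A F (playHist A F r 𝔄 t) s) := by
  induction t with
  | zero =>
      intro p hp
      rw [subH_playHist_zero] at hp
      exact absurd hp (by simp)
  | succ t ih =>
      rw [subH_playHist_succ]
      split
      · exact goodList_cons A F 𝔄 s _ ih
      · exact ih

lemma tpe_of_length_eq (owner : H → ι) (i j : ι) {Ti Tj : Type}
    [DecidableEq Ti] [DecidableEq Tj]
    (Fi : Ti → Finset H) (Fj : Tj → Finset H)
    (ri : HistG A Fi → Ti) (rj : HistG A Fj → Tj)
    (si : Ti) (sj : Tj) (ti tj : ℕ)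
    (hlen : (subH A Fi (playHist A Fi ri 𝔄 ti) si).length =
      (subH A Fj (playHist A Fj rj 𝔄 tj) sj).length) :
    TPE A owner i j Fi Fj si sj (subH A Fi (playHist A Fi ri 𝔄 ti) si)
      (subH A Fj (playHist A Fj rj 𝔄 tj) sj) := by
  refine ⟨hlen, ?_⟩
  intro t hti htj h _ _ hmi hmj
  rw [goodList_subH A Fi ri 𝔄 si ti t hti, goodList_subH A Fj rj 𝔄 sj tj t htj]
  simp only [hlen]

end Aux

/-- Proposition (coupling step): if `Γ` is isomorphically factorable for `i` and `j`
via `φ` with `φ s_i* = s_j*` and the index policy `r_i` is more compatible with `s_i*`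
than `r_j` is with `s_j*`, then along any response path `𝔄`, whenever `s_j*` is played
for the `k`-th time at a finite period, the number of plays of any `s_i' ≠ s_i*` before
`i`'s `k`-th play of `s_i*` is at most the number of plays of `φ s_i'` before `j`'s
`k`-th play of `s_j*`. -/
theorem coupled_experimentation_counts
    (owner : H → ι) (A : H → Type) [∀ h, Fintype (A h)] [∀ h, DecidableEq (A h)]
    (payoff : ι → (∀ h, A h) → ℝ)
    (i j : ι) (hij : i ≠ j)
    (Fi : (∀ h : {h // owner h = i}, A h) → Finset H)
    (Fj : (∀ h : {h // owner h = j}, A h) → Finset H)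
    -- the game is factorable for i
    (hFiOwner : ∀ si h, h ∈ Fi si → owner h ≠ i)
    (hFiMeas : ∀ si (so so' : ∀ h : {h // owner h ≠ i}, A h),
      payoff i (combine owner A i si so) = payoff i (combine owner A i si so') ↔
        ∀ (h : H), h ∈ Fi si → ∀ (hne : owner h ≠ i), so ⟨h, hne⟩ = so' ⟨h, hne⟩)
    (hFiDisj : ∀ si si', si ≠ si' → Disjoint (Fi si) (Fi si'))
    -- the game is factorable for j
    (hFjOwner : ∀ sj h, h ∈ Fj sj → owner h ≠ j)
    (hFjMeas : ∀ sj (so so' : ∀ h : {h // owner h ≠ j}, A h),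
      payoff j (combine owner A j sj so) = payoff j (combine owner A j sj so') ↔
        ∀ (h : H), h ∈ Fj sj → ∀ (hne : owner h ≠ j), so ⟨h, hne⟩ = so' ⟨h, hne⟩)
    (hFjDisj : ∀ sj sj', sj ≠ sj' → Disjoint (Fj sj) (Fj sj'))
    -- isomorphic factoring via φ
    (φ : (∀ h : {h // owner h = i}, A h) ≃ (∀ h : {h // owner h = j}, A h))
    (hiso : ∀ si (h : H), owner h ≠ i → owner h ≠ j → (h ∈ Fi si ↔ h ∈ Fj (φ si)))
    (sistar : ∀ h : {h // owner h = i}, A h) (sjstar : ∀ h : {h // owner h = j}, A h)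
    (hφstar : φ sistar = sjstar)
    -- index policies for i and j
    (idxi : ∀ s, List (ObsG A Fi s) → ℝ) (ri : HistG A Fi → _)
    (hri : IsIndexPolicy A Fi idxi ri)
    (idxj : ∀ s, List (ObsG A Fj s) → ℝ) (rj : HistG A Fj → _)
    (hrj : IsIndexPolicy A Fj idxj rj)
    (hcompat : PolicyMoreCompat A owner i j Fi Fj φ idxi idxj sistar sjstar)
    -- a response path, and the count k
    (𝔄 : ℕ → ∀ h, A h) (k : ℕ) (hk : 1 ≤ k)
    -- s_j* is played for the k-th time at some finite period
    (hfin : ∃ T, (subH A Fj (playHist A Fj rj 𝔄 T) sjstar).length = k) :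
    ∀ Tj : ℕ, (subH A Fj (playHist A Fj rj 𝔄 Tj) sjstar).length = k →
      (∀ t < Tj, (subH A Fj (playHist A Fj rj 𝔄 t) sjstar).length < k) →
      ∀ Ti : ℕ, (subH A Fi (playHist A Fi ri 𝔄 Ti) sistar).length < k →
        ∀ si', si' ≠ sistar →
          (subH A Fi (playHist A Fi ri 𝔄 Ti) si').length ≤
            (subH A Fj (playHist A Fj rj 𝔄 Tj) (φ si')).length := by
  -- for every `m < k` there is a period at which `j` has played `sjstar` exactly
  -- `m` times and plays it again
  have hexist : ∀ m, ∃ t, m < k →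
      (subH A Fj (playHist A Fj rj 𝔄 t) sjstar).length = m ∧
        rj (playHist A Fj rj 𝔄 t) = sjstar := by
    intro m
    by_cases hm : m < k
    · obtain ⟨T0, hT0⟩ := hfin
      have hex : ∃ t, m + 1 ≤ (subH A Fj (playHist A Fj rj 𝔄 t) sjstar).length :=
        ⟨T0, by omega⟩
      have h1 := Nat.find_spec hex
      have hz : (subH A Fj (playHist A Fj rj 𝔄 0) sjstar).length = 0 := by
        rw [subH_playHist_zero]; rfl
      have hne0 : Nat.find hex ≠ 0 := by
        intro h0; rw [h0] at h1; omega
      obtain ⟨t1, ht1⟩ := Nat.exists_eq_succ_of_ne_zero hne0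
      have h3 : ¬ (m + 1 ≤ (subH A Fj (playHist A Fj rj 𝔄 t1) sjstar).length) :=
        Nat.find_min hex (by omega)
      rw [ht1] at h1
      have h1' : m + 1 ≤ (subH A Fj (playHist A Fj rj 𝔄 (t1 + 1)) sjstar).length := h1
      have hstep := subH_playHist_length_succ A Fj rj 𝔄 t1 sjstar
      by_cases hp : rj (playHist A Fj rj 𝔄 t1) = sjstar
      · rw [if_pos hp] at hstep
        exact ⟨t1, fun _ => ⟨by omega, hp⟩⟩
      · rw [if_neg hp] at hstep
        exact absurd h1' (by omega)
    · exact ⟨0, fun h => absurd h hm⟩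
  choose σ hσ using hexist
  -- the main coupled induction on `i`'s periods
  have main : ∀ Ti : ℕ, (subH A Fi (playHist A Fi ri 𝔄 Ti) sistar).length < k →
      ∀ si', si' ≠ sistar →
        (subH A Fi (playHist A Fi ri 𝔄 Ti) si').length ≤
          (subH A Fj (playHist A Fj rj 𝔄
            (σ (subH A Fi (playHist A Fi ri 𝔄 Ti) sistar).length)) (φ si')).length := by
    intro Ti
    induction Ti with
    | zero =>
        intro _ si' _
        rw [subH_playHist_zero]
        exact Nat.zero_le _
    | succ t ih =>
        intro hlt si' hne
        have hmono_i : (subH A Fi (playHist A Fi ri 𝔄 t) sistar).length ≤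
            (subH A Fi (playHist A Fi ri 𝔄 (t + 1)) sistar).length :=
          subH_playHist_length_mono A Fi ri 𝔄 sistar (Nat.le_succ t)
        have hlt' : (subH A Fi (playHist A Fi ri 𝔄 t) sistar).length < k :=
          lt_of_le_of_lt hmono_i hlt
        have hstep_star := subH_playHist_length_succ A Fi ri 𝔄 t sistar
        have hstep' := subH_playHist_length_succ A Fi ri 𝔄 t si'
        by_cases hps : ri (playHist A Fi ri 𝔄 t) = sistar
        · -- `i` plays `sistar` at period `t`
          have hne' : ri (playHist A Fi ri 𝔄 t) ≠ si' := by
            rw [hps]; exact fun h => hne h.symm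
          have h1 : (subH A Fi (playHist A Fi ri 𝔄 (t + 1)) si').length =
              (subH A Fi (playHist A Fi ri 𝔄 t) si').length := by
            rw [hstep', if_neg hne', Nat.add_zero]
          have h2 : (subH A Fi (playHist A Fi ri 𝔄 (t + 1)) sistar).length =
              (subH A Fi (playHist A Fi ri 𝔄 t) sistar).length + 1 := by
            rw [hstep_star, if_pos hps]
          rw [h1, h2]
          refine le_trans (ih hlt' si' hne) ?_
          have ha := (hσ _ hlt').1
          have hb := (hσ ((subH A Fi (playHist A Fi ri 𝔄 t) sistar).length + 1)
            (by omega)).1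
          have hle : σ (subH A Fi (playHist A Fi ri 𝔄 t) sistar).length ≤
              σ ((subH A Fi (playHist A Fi ri 𝔄 t) sistar).length + 1) := by
            by_contra hc
            push_neg at hc
            have := subH_playHist_length_mono A Fj rj 𝔄 sjstar (le_of_lt hc)
            omega
          exact subH_playHist_length_mono A Fj rj 𝔄 (φ si') hle
        · -- `i` does not play `sistar` at period `t`
          have h2 : (subH A Fi (playHist A Fi ri 𝔄 (t + 1)) sistar).length =
              (subH A Fi (playHist A Fi ri 𝔄 t) sistar).length := by
            rw [hstep_star, if_neg hps, Nat.add_zero]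
          rw [h2]
          by_cases hps' : ri (playHist A Fi ri 𝔄 t) = si'
          · -- `i` plays `si'` at period `t`
            have h1 : (subH A Fi (playHist A Fi ri 𝔄 (t + 1)) si').length =
                (subH A Fi (playHist A Fi ri 𝔄 t) si').length + 1 := by
              rw [hstep', if_pos hps']
            rw [h1]
            have hIH := ih hlt' si' hne
            rcases lt_or_eq_of_le hIH with hIH' | hIH'
            · omega
            · exfalso
              have hσ1 := (hσ _ hlt').1
              have hσ2 := (hσ _ hlt').2
              refine hcompat (playHist A Fi ri 𝔄 t)
                (playHist A Fj rj 𝔄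
                  (σ (subH A Fi (playHist A Fi ri 𝔄 t) sistar).length)) si' hne
                ?_ ?_ ?_ ?_
              · exact tpe_of_length_eq A 𝔄 owner i j Fi Fj ri rj sistar sjstar
                  t _ hσ1.symm
              · exact tpe_of_length_eq A 𝔄 owner i j Fi Fj ri rj si' (φ si')
                  t _ hIH'
              · intro sj'
                have := hrj (playHist A Fj rj 𝔄
                  (σ (subH A Fi (playHist A Fi ri 𝔄 t) sistar).length)) sj'
                rwa [hσ2] at this
              · intro si''
                have := hri (playHist A Fi ri 𝔄 t) si''
                rwa [hps'] at this
          · have h1 : (subH A Fi (playHist A Fi ri 𝔄 (t + 1)) si').length =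
                (subH A Fi (playHist A Fi ri 𝔄 t) si').length := by
              rw [hstep', if_neg hps', Nat.add_zero]
            rw [h1]
            exact ih hlt' si' hne
  -- conclusion
  intro Tj hTj _ Ti hTi si' hne
  have hm := main Ti hTi si' hne
  have hσ1 := (hσ _ hTi).1
  have hle : σ (subH A Fi (playHist A Fi ri 𝔄 Ti) sistar).length ≤ Tj := by
    by_contra hc
    push_neg at hc
    have := subH_playHist_length_mono A Fj rj 𝔄 sjstar (le_of_lt hc)
    omega
  exact le_trans hm (subH_playHist_length_mono A Fj rj 𝔄 (φ si') hle)

end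
end

section
/- Suppose index policy r_i is more compatible with s_i* than index policy r_j is with s_j* (with φ(s_i*) = s_j* under isomorphic factoring). Then for any survival probability 0 ≤ γ < 1 and any mixed strategy profile σ, the induced response frequencies satisfy φ_i(s_i*; r_i, σ_{-i}) ≥ φ_j(s_j*; r_j, σ_{-j}). -/
open scoped Classical

noncomputable section

variable {ι H : Type} [Fintype ι] [DecidableEq ι] [Fintype H] [DecidableEq H]

section Induced

variable (owner : H → ι) (A : H → Type) [∀ h, Fintype (A h)] [∀ h, DecidableEq (A h)]

/-- The probability, under the mixed strategy profile `σ` (one independent mixed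
strategy per player role), that a freshly drawn pure strategy profile of the opponents
prescribes the actions `o` at the `s`-relevant information sets. -/
def obsProb (σ : ∀ k : ι, (∀ h : {h // owner h = k}, A h) → ℝ)
    {T : Type} (F : T → Finset H) (s : T) (o : ObsG A F s) : ℝ :=
  ∏ k : ι, ∑ sk : ∀ h : {h // owner h = k}, A h,
    (if ∀ (h : H) (hm : h ∈ F s) (hk : owner h = k), sk ⟨h, hk⟩ = o ⟨h, hm⟩
     then σ k sk else 0)

/-- The probability of a given personal history under the learning rule `r` when each
period the opponents' pure strategies are drawn i.i.d. from `σ`. -/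
def histProb (σ : ∀ k : ι, (∀ h : {h // owner h = k}, A h) → ℝ)
    {T : Type} [DecidableEq T] (F : T → Finset H) (r : HistG A F → T) :
    HistG A F → ℝ
  | [] => 1
  | e :: y =>
      (if r y = e.1 then obsProb owner A σ F e.1 e.2 else 0) *
        histProb σ F r y

/-- The (finite) set of histories of length `t` reachable under the rule `r`. -/
def Hists {T : Type} [DecidableEq T] (F : T → Finset H)
    (r : HistG A F → T) : ℕ → Finset (HistG A F)
  | 0 => {([] : HistG A F)}
  | t + 1 => (Hists F r t).biUnion fun y =>
      Finset.univ.image fun o : ObsG A F (r y) => (⟨r y, o⟩ : Σ s : T, ObsG A F s) :: y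

/-- The induced response: the discounted lifetime frequency with which an agent using
the learning rule `r` against i.i.d. opponent play drawn from `σ`, surviving each
period with probability `γ`, plays strategy `s`. -/
def inducedResp (σ : ∀ k : ι, (∀ h : {h // owner h = k}, A h) → ℝ)
    {T : Type} [Fintype T] [DecidableEq T] (F : T → Finset H) (r : HistG A F → T)
    (γ : ℝ) (s : T) : ℝ :=
  (1 - γ) * ∑' t : ℕ, γ ^ t *
    ∑ y ∈ Hists A F r t, histProb owner A σ F r y * (if r y = s then 1 else 0)

end Induced

/-! ### Auxiliary: arithmetic lemmas -/

/-- Discrete fixed point for a monotone map bounded on `[0,N]`. -/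
theorem aux_fixed_point (f : ℕ → ℕ) (N : ℕ)
    (hmono : ∀ a b, a ≤ b → b ≤ N → f a ≤ f b) (hN : f N ≤ N) :
    ∃ n, n ≤ N ∧ f n = n := by
  have hex : ∃ n, n ≤ N ∧ f n ≤ n := ⟨N, le_rfl, hN⟩
  classical
  set n := Nat.find hex with hn
  obtain ⟨hnN, hfn⟩ := Nat.find_spec hex
  rcases Nat.eq_zero_or_pos n with h0 | hpos
  · exact ⟨n, hnN, le_antisymm hfn (h0 ▸ Nat.zero_le _)⟩
  · have hlt : n - 1 < n := Nat.sub_lt hpos one_pos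
    have hnot := Nat.find_min hex hlt
    push_neg at hnot
    have h1 : n ≤ f (n - 1) := by
      have := hnot (le_trans (Nat.sub_le _ _) hnN)
      omega
    have h2 : f (n - 1) ≤ f n := hmono _ _ (Nat.sub_le _ _) hnN
    exact ⟨n, hnN, le_antisymm hfn (le_trans h1 h2)⟩

/-- A 0/1-step counter starting at 0 attains each intermediate value with a step. -/
theorem aux_exists_step (f : ℕ → ℕ) (h0 : f 0 = 0)
    (hstep : ∀ t, f (t + 1) = f t ∨ f (t + 1) = f t + 1) :
    ∀ t k, k < f t → ∃ u, u < t ∧ f u = k ∧ f (u + 1) = f u + 1 := by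
  intro t
  induction t with
  | zero => intro k hk; omega
  | succ t ih =>
      intro k hk
      by_cases h : k < f t
      · obtain ⟨u, hu, h1, h2⟩ := ih k h
        exact ⟨u, Nat.lt_succ_of_lt hu, h1, h2⟩
      · rcases hstep t with h' | h'
        · omega
        · exact ⟨t, Nat.lt_succ_self t, by omega, by omega⟩

theorem aux_mono_of_step (f : ℕ → ℕ)
    (hstep : ∀ t, f (t + 1) = f t ∨ f (t + 1) = f t + 1) :
    Monotone f := by
  apply monotone_nat_of_le_succ
  intro n; rcases hstep n with h | h <;> omega

/-- Abel-type comparison: if cumulative sums dominate, so do discounted sums. -/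
theorem aux_abel (γ : ℝ) (hγ0 : 0 ≤ γ) (hγ1 : γ ≤ 1) (a b : ℕ → ℝ)
    (hcum : ∀ T, ∑ t ∈ Finset.range T, b t ≤ ∑ t ∈ Finset.range T, a t) :
    ∀ T, ∑ t ∈ Finset.range T, γ ^ t * b t ≤ ∑ t ∈ Finset.range T, γ ^ t * a t := by
  have key : ∀ T, γ ^ T * (∑ t ∈ Finset.range T, a t - ∑ t ∈ Finset.range T, b t)
      ≤ ∑ t ∈ Finset.range T, γ ^ t * a t - ∑ t ∈ Finset.range T, γ ^ t * b t := by
    intro T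
    induction T with
    | zero => simp
    | succ T ih =>
        have hAB : 0 ≤ ∑ t ∈ Finset.range (T+1), a t - ∑ t ∈ Finset.range (T+1), b t := by
          have := hcum (T+1); linarith
        have hpow : γ ^ (T+1) ≤ γ ^ T := by
          calc γ ^ (T+1) = γ ^ T * γ := by ring
          _ ≤ γ ^ T * 1 := by
              apply mul_le_mul_of_nonneg_left hγ1 (pow_nonneg hγ0 T)
          _ = γ ^ T := by ring
        have h1 : γ ^ (T+1) * (∑ t ∈ Finset.range (T+1), a t - ∑ t ∈ Finset.range (T+1), b t)
            ≤ γ ^ T * (∑ t ∈ Finset.range (T+1), a t - ∑ t ∈ Finset.range (T+1), b t) :=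
          mul_le_mul_of_nonneg_right hpow hAB
        rw [Finset.sum_range_succ, Finset.sum_range_succ,
          Finset.sum_range_succ (fun t => γ ^ t * a t), Finset.sum_range_succ (fun t => γ ^ t * b t)]
        have expand : γ ^ T * ((∑ t ∈ Finset.range T, a t + a T) - (∑ t ∈ Finset.range T, b t + b T))
            = γ ^ T * (∑ t ∈ Finset.range T, a t - ∑ t ∈ Finset.range T, b t)
              + (γ ^ T * a T - γ ^ T * b T) := by ring
        calc γ ^ (T+1) * ((∑ t ∈ Finset.range T, a t + a T) - (∑ t ∈ Finset.range T, b t + b T))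
            ≤ γ ^ T * ((∑ t ∈ Finset.range T, a t + a T) - (∑ t ∈ Finset.range T, b t + b T)) := by
              simpa [Finset.sum_range_succ] using h1
          _ = γ ^ T * (∑ t ∈ Finset.range T, a t - ∑ t ∈ Finset.range T, b t)
              + (γ ^ T * a T - γ ^ T * b T) := expand
          _ ≤ (∑ t ∈ Finset.range T, γ ^ t * a t - ∑ t ∈ Finset.range T, γ ^ t * b t)
              + (γ ^ T * a T - γ ^ T * b T) := by linarith
          _ = (∑ t ∈ Finset.range T, γ ^ t * a t + γ ^ T * a T)
              - (∑ t ∈ Finset.range T, γ ^ t * b t + γ ^ T * b T) := by ring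
  intro T
  have h1 := key T
  have h2 : 0 ≤ γ ^ T * (∑ t ∈ Finset.range T, a t - ∑ t ∈ Finset.range T, b t) := by
    have := hcum T
    exact mul_nonneg (pow_nonneg hγ0 T) (by linarith)
  linarith
/-! ### Auxiliary: deterministic play along a response path -/

set_option linter.unusedSectionVars false

section AuxPath

variable (A : H → Type) [∀ h, Fintype (A h)] [∀ h, DecidableEq (A h)]
variable {S : Type} [DecidableEq S] (F : S → Finset H) (r : HistG A F → S)

theorem aux_subH_nil (s : S) : subH A F ([] : HistG A F) s = [] := rfl

theorem aux_subH_cons_self (y : HistG A F) (s : S) (o : ObsG A F s) :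
    subH A F ((⟨s, o⟩ : Σ s : S, ObsG A F s) :: y) s = o :: subH A F y s := by
  simp [subH, List.filterMap_cons]

theorem aux_subH_cons_ne (y : HistG A F) (s₀ s : S) (o : ObsG A F s₀) (h : s₀ ≠ s) :
    subH A F ((⟨s₀, o⟩ : Σ s : S, ObsG A F s) :: y) s = subH A F y s := by
  simp [subH, List.filterMap_cons, h]

theorem aux_subH_cons_length (y : HistG A F) (e : Σ s : S, ObsG A F s) (s : S) :
    (subH A F (e :: y) s).length
      = (if e.1 = s then 1 else 0) + (subH A F y s).length := by
  obtain ⟨s₀, o⟩ := e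
  by_cases h : s₀ = s
  · subst h; rw [aux_subH_cons_self]; simp; omega
  · rw [aux_subH_cons_ne A F y s₀ s o h]; simp [h]

theorem aux_subH_length_sum [Fintype S] (y : HistG A F) :
    ∑ s : S, (subH A F y s).length = y.length := by
  induction y with
  | nil => simp [aux_subH_nil]
  | cons e y ih =>
      simp only [aux_subH_cons_length, Finset.sum_add_distrib, ih]
      rw [Finset.sum_ite_eq Finset.univ e.1 (fun _ => 1)]
      simp [List.length_cons]; ring

/-- Observation lists read off a per-count observation function, most recent first. -/
def obsList {s : S} (g : ℕ → ObsG A F s) : ℕ → List (ObsG A F s)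
  | 0 => []
  | n + 1 => g n :: obsList g n

theorem aux_obsList_length {s : S} (g : ℕ → ObsG A F s) (c : ℕ) :
    (obsList A F g c).length = c := by
  induction c with
  | zero => rfl
  | succ c ih => simp [obsList, ih]

theorem aux_obsList_getElem {s : S} (g : ℕ → ObsG A F s) (c : ℕ) :
    ∀ (τ : ℕ) (hτ : τ < (obsList A F g c).length),
      (obsList A F g c)[τ]'hτ = g (c - 1 - τ) := by
  induction c with
  | zero => intro τ hτ; simp [aux_obsList_length] at hτ
  | succ c ih =>
      intro τ hτ
      match τ with
      | 0 => simp [obsList]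
      | τ + 1 =>
          have hττ : τ + 1 < c + 1 := by
            have := hτ; rwa [aux_obsList_length] at this
          have hτ' : τ < (obsList A F g c).length := by
            rw [aux_obsList_length]; omega
          have : (obsList A F g (c+1))[τ+1]'hτ = (obsList A F g c)[τ]'hτ' := by
            simp [obsList]
          rw [this, ih τ hτ']
          have harith : c - 1 - τ = c + 1 - 1 - (τ + 1) := by omega
          rw [harith]

/-- The deterministic history induced by a per-(strategy,count) observation function. -/
def pHist (O : ∀ s : S, ℕ → ObsG A F s) : ℕ → HistG A F
  | 0 => []
  | t + 1 =>
      let y := pHist O t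
      (⟨r y, O (r y) (subH A F y (r y)).length⟩ : Σ s : S, ObsG A F s) :: y

theorem aux_pHist_length (O : ∀ s : S, ℕ → ObsG A F s) (t : ℕ) :
    (pHist A F r O t).length = t := by
  induction t with
  | zero => rfl
  | succ t ih => simp [pHist, ih]

/-- The count of strategy `s` at time `t`. -/
def pcnt (O : ∀ s : S, ℕ → ObsG A F s) (t : ℕ) (s : S) : ℕ :=
  (subH A F (pHist A F r O t) s).length

theorem aux_pcnt_zero (O : ∀ s : S, ℕ → ObsG A F s) (s : S) : pcnt A F r O 0 s = 0 := rfl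

theorem aux_pcnt_succ (O : ∀ s : S, ℕ → ObsG A F s) (t : ℕ) (s : S) :
    pcnt A F r O (t + 1) s
      = (if r (pHist A F r O t) = s then 1 else 0) + pcnt A F r O t s := by
  simp only [pcnt, pHist, aux_subH_cons_length]

theorem aux_pcnt_step (O : ∀ s : S, ℕ → ObsG A F s) (t : ℕ) (s : S) :
    pcnt A F r O (t+1) s = pcnt A F r O t s ∨ pcnt A F r O (t+1) s = pcnt A F r O t s + 1 := by
  rw [aux_pcnt_succ]
  by_cases h : r (pHist A F r O t) = s <;> simp [h] <;> omega

theorem aux_pcnt_mono (O : ∀ s : S, ℕ → ObsG A F s) (s : S) :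
    Monotone (fun t => pcnt A F r O t s) :=
  aux_mono_of_step _ (fun t => aux_pcnt_step A F r O t s)

theorem aux_pcnt_sum [Fintype S] (O : ∀ s : S, ℕ → ObsG A F s) (t : ℕ) :
    ∑ s : S, pcnt A F r O t s = t := by
  simp only [pcnt]
  rw [aux_subH_length_sum, aux_pHist_length]

theorem aux_pcnt_le [Fintype S] (O : ∀ s : S, ℕ → ObsG A F s) (t : ℕ) (s : S) :
    pcnt A F r O t s ≤ t := by
  have := aux_pcnt_sum A F r O t (S := S)
  calc pcnt A F r O t s ≤ ∑ s' : S, pcnt A F r O t s' :=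
        Finset.single_le_sum (fun _ _ => Nat.zero_le _) (Finset.mem_univ s)
    _ = t := this

/-- The subhistory along a path-history is the observation list at the current count. -/
theorem aux_subH_pHist (O : ∀ s : S, ℕ → ObsG A F s) (t : ℕ) (s : S) :
    subH A F (pHist A F r O t) s = obsList A F (O s) (pcnt A F r O t s) := by
  induction t with
  | zero => rfl
  | succ t ih =>
      by_cases h : r (pHist A F r O t) = s
      · have hc : pcnt A F r O (t+1) s = pcnt A F r O t s + 1 := by
          rw [aux_pcnt_succ, if_pos h]; omega
        show subH A F ((⟨r (pHist A F r O t), _⟩ : Σ s : S, ObsG A F s) :: _) s = _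
        rw [hc]
        have : (⟨r (pHist A F r O t),
            O (r (pHist A F r O t)) (subH A F (pHist A F r O t) (r (pHist A F r O t))).length⟩
              : Σ s : S, ObsG A F s)
            = ⟨s, O s (pcnt A F r O t s)⟩ := by
          subst h; rfl
        rw [this, aux_subH_cons_self, ih]
        rfl
      · have hc : pcnt A F r O (t+1) s = pcnt A F r O t s := by
          rw [aux_pcnt_succ, if_neg h]; omega
        show subH A F ((⟨r (pHist A F r O t), _⟩ : Σ s : S, ObsG A F s) :: _) s = _
        rw [hc, aux_subH_cons_ne A F _ _ _ _ h, ih]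

/-- Existence of the time of the `(k+1)`-th play of `s`. -/
theorem aux_play_time (O : ∀ s : S, ℕ → ObsG A F s) (t : ℕ) (s : S) (k : ℕ)
    (hk : k < pcnt A F r O t s) :
    ∃ u, u < t ∧ pcnt A F r O u s = k ∧ r (pHist A F r O u) = s := by
  obtain ⟨u, hu, h1, h2⟩ := aux_exists_step (fun t => pcnt A F r O t s)
    (aux_pcnt_zero A F r O s) (fun t => aux_pcnt_step A F r O t s) t k hk
  refine ⟨u, hu, h1, ?_⟩
  by_contra hne
  rw [aux_pcnt_succ, if_neg hne] at h2
  omega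

end AuxPath
/-! ### Auxiliary: pathwise comparison of star-play counts -/

section AuxCore

variable (A : H → Type) [∀ h, Fintype (A h)] [∀ h, DecidableEq (A h)]
variable (owner : H → ι) (i j : ι)
variable {Ti Tj : Type} [Fintype Ti] [DecidableEq Ti] [Fintype Tj] [DecidableEq Tj]
variable (Fi : Ti → Finset H) (Fj : Tj → Finset H) (φ : Ti ≃ Tj)

/-- Agent `i`'s observation function along a response path. -/
def OiOf (p : ℕ → Ti → (∀ h, A h)) : ∀ s : Ti, ℕ → ObsG A Fi s :=
  fun s n => fun h => p n s h.1

/-- Agent `j`'s observation function along the same response path. -/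
def OjOf (p : ℕ → Ti → (∀ h, A h)) : ∀ s' : Tj, ℕ → ObsG A Fj s' :=
  fun s' n => fun h => p n (φ.symm s') h.1

theorem aux_tpe (p : ℕ → Ti → (∀ h, A h)) (s : Ti) (c : ℕ) :
    TPE A owner i j Fi Fj s (φ s)
      (obsList A Fi (OiOf A Fi p s) c) (obsList A Fj (OjOf A Fj φ p (φ s)) c) := by
  constructor
  · rw [aux_obsList_length, aux_obsList_length]
  · intro τ hti htj h _ _ hmi hmj
    rw [aux_obsList_getElem, aux_obsList_getElem]
    simp [OiOf, OjOf]

variable (sistar : Ti) (sjstar : Tj)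
variable (idxi : ∀ s, List (ObsG A Fi s) → ℝ) (ri : HistG A Fi → Ti)
variable (idxj : ∀ s, List (ObsG A Fj s) → ℝ) (rj : HistG A Fj → Tj)

/-- Core pathwise lemma: along any response path, the more-compatible agent plays her
star strategy at least as often, at every horizon. -/
theorem aux_core (hφstar : φ sistar = sjstar)
    (hri : IsIndexPolicy A Fi idxi ri) (hrj : IsIndexPolicy A Fj idxj rj)
    (hcompat : PolicyMoreCompat A owner i j Fi Fj φ idxi idxj sistar sjstar)
    (p : ℕ → Ti → (∀ h, A h)) :
    ∀ t, pcnt A Fj rj (OjOf A Fj φ p) t sjstar ≤ pcnt A Fi ri (OiOf A Fi p) t sistar := by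
  subst hφstar
  set Oi := OiOf A Fi p with hOi
  set Oj := OjOf A Fj φ p with hOj
  intro t
  induction t with
  | zero => simp [aux_pcnt_zero]
  | succ t ih =>
      by_contra hcon
      push_neg at hcon
      -- step facts
      have hJs := aux_pcnt_succ A Fj rj Oj t (φ sistar)
      have hIs := aux_pcnt_succ A Fi ri Oi t sistar
      have hrjt : rj (pHist A Fj rj Oj t) = φ sistar := by
        by_contra hne
        rw [if_neg hne] at hJs
        omega
      have hrit : ri (pHist A Fi ri Oi t) ≠ sistar := by
        intro heq
        rw [if_pos heq] at hIs
        rw [if_pos hrjt] at hJs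
        omega
      rw [if_pos hrjt] at hJs
      rw [if_neg hrit] at hIs
      set m := pcnt A Fi ri Oi t sistar with hm
      have hmJ : pcnt A Fj rj Oj t (φ sistar) = m := by omega
      -- pigeonhole over non-star strategies
      have hsumI : ∑ s : Ti, pcnt A Fi ri Oi (t+1) s = t + 1 := aux_pcnt_sum A Fi ri Oi (t+1)
      have hsumJ : ∑ s : Ti, pcnt A Fj rj Oj t (φ s) = t := by
        rw [Equiv.sum_comp φ (fun s' => pcnt A Fj rj Oj t s')]
        exact aux_pcnt_sum A Fj rj Oj t
      have heraseI : m + ∑ s ∈ Finset.univ.erase sistar, pcnt A Fi ri Oi (t+1) s = t + 1 := by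
        have h2 : pcnt A Fi ri Oi (t+1) sistar
            + ∑ s ∈ Finset.univ.erase sistar, pcnt A Fi ri Oi (t+1) s
            = ∑ s : Ti, pcnt A Fi ri Oi (t+1) s := by
          simpa using Finset.add_sum_erase Finset.univ (fun s => pcnt A Fi ri Oi (t+1) s)
            (Finset.mem_univ sistar)
        omega
      have heraseJ : m + ∑ s ∈ Finset.univ.erase sistar, pcnt A Fj rj Oj t (φ s) = t := by
        have h2 : pcnt A Fj rj Oj t (φ sistar)
            + ∑ s ∈ Finset.univ.erase sistar, pcnt A Fj rj Oj t (φ s)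
            = ∑ s : Ti, pcnt A Fj rj Oj t (φ s) := by
          simpa using Finset.add_sum_erase Finset.univ (fun s => pcnt A Fj rj Oj t (φ s))
            (Finset.mem_univ sistar)
        omega
      have hlt : ∑ s ∈ Finset.univ.erase sistar, pcnt A Fj rj Oj t (φ s)
          < ∑ s ∈ Finset.univ.erase sistar, pcnt A Fi ri Oi (t+1) s := by omega
      obtain ⟨s, hsmem, hslt⟩ := Finset.exists_lt_of_sum_lt hlt
      have hsne : s ≠ sistar := Finset.ne_of_mem_erase hsmem
      set NI1 := pcnt A Fi ri Oi (t+1) s with hNI1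
      set nJ := pcnt A Fj rj Oj t (φ s) with hnJ
      -- play-time choice functions
      have exi : ∀ n, n < NI1 → ∃ u, u < t + 1 ∧ pcnt A Fi ri Oi u s = n
          ∧ ri (pHist A Fi ri Oi u) = s := fun n hn => aux_play_time A Fi ri Oi (t+1) s n hn
      have hcJ1 : pcnt A Fj rj Oj (t+1) (φ sistar) = m + 1 := by omega
      have exj : ∀ k, k < m + 1 → ∃ u, u < t + 1 ∧ pcnt A Fj rj Oj u (φ sistar) = k
          ∧ rj (pHist A Fj rj Oj u) = φ sistar := fun k hk =>
        aux_play_time A Fj rj Oj (t+1) (φ sistar) k (by omega)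
      classical
      set ui : ℕ → ℕ := fun n => if hn : n < NI1 then (exi n hn).choose else 0 with hui
      have huiP : ∀ n, (hn : n < NI1) → ui n < t + 1 ∧ pcnt A Fi ri Oi (ui n) s = n
          ∧ ri (pHist A Fi ri Oi (ui n)) = s := by
        intro n hn
        have := (exi n hn).choose_spec
        simpa [hui, dif_pos hn] using this
      set vj : ℕ → ℕ := fun k => if hk : k < m + 1 then (exj k hk).choose else 0 with hvj
      have hvjP : ∀ k, (hk : k < m + 1) → vj k < t + 1 ∧ pcnt A Fj rj Oj (vj k) (φ sistar) = k
          ∧ rj (pHist A Fj rj Oj (vj k)) = φ sistar := by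
        intro k hk
        have := (exj k hk).choose_spec
        simp only [hvj, dif_pos hk]
        exact this
      set mfun : ℕ → ℕ := fun n => pcnt A Fi ri Oi (ui n) sistar with hmfun
      have hmfun_le : ∀ n, n < NI1 → mfun n ≤ m := by
        intro n hn
        have h1 := (huiP n hn).1
        exact aux_pcnt_mono A Fi ri Oi sistar (by omega : ui n ≤ t)
      -- the staircase map
      set f : ℕ → ℕ := fun n => pcnt A Fj rj Oj (vj (mfun n)) (φ s) with hf
      have hN1pos : 1 ≤ NI1 := by omega
      set N := NI1 - 1 with hN
      have hfmono : ∀ a b, a ≤ b → b ≤ N → f a ≤ f b := by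
        intro a b hab hbN
        rcases eq_or_lt_of_le hab with rfl | hab'
        · exact le_rfl
        · have haN : a < NI1 := by omega
          have hbN' : b < NI1 := by omega
          have huab : ui a ≤ ui b := by
            by_contra hcon'
            push_neg at hcon'
            have h3 : pcnt A Fi ri Oi (ui b) s ≤ pcnt A Fi ri Oi (ui a) s :=
              aux_pcnt_mono A Fi ri Oi s (le_of_lt hcon')
            have h4 := (huiP a haN).2.1
            have h5 := (huiP b hbN').2.1
            omega
          have hmab : mfun a ≤ mfun b := aux_pcnt_mono A Fi ri Oi sistar huab
          have hmaux : mfun a ≤ m := hmfun_le a haN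
          have hmbux : mfun b ≤ m := hmfun_le b hbN'
          have hvab : vj (mfun a) ≤ vj (mfun b) := by
            rcases eq_or_lt_of_le hmab with heq | hmab'
            · rw [heq]
            · by_contra hcon'
              push_neg at hcon'
              have h3 : pcnt A Fj rj Oj (vj (mfun b)) (φ sistar)
                  ≤ pcnt A Fj rj Oj (vj (mfun a)) (φ sistar) :=
                aux_pcnt_mono A Fj rj Oj (φ sistar) (le_of_lt hcon')
              have h4 := (hvjP (mfun a) (by omega)).2.1
              have h5 := (hvjP (mfun b) (by omega)).2.1
              omega
          exact aux_pcnt_mono A Fj rj Oj (φ s) hvab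
      have hfN : f N ≤ N := by
        have hNlt : N < NI1 := by omega
        have h1 : vj (mfun N) ≤ t := by
          have := (hvjP (mfun N) (by have := hmfun_le N hNlt; omega)).1
          omega
        have h2 : pcnt A Fj rj Oj (vj (mfun N)) (φ s) ≤ pcnt A Fj rj Oj t (φ s) :=
          aux_pcnt_mono A Fj rj Oj (φ s) h1
        have h3 : f N = pcnt A Fj rj Oj (vj (mfun N)) (φ s) := rfl
        omega
      obtain ⟨nstar, hnstarN, hnstar⟩ := aux_fixed_point f N hfmono hfN
      have hnstarNI1 : nstar < NI1 := by omega
      have hmstar : mfun nstar ≤ m := hmfun_le nstar hnstarNI1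
      -- apply compatibility at the crossing point
      set yi := pHist A Fi ri Oi (ui nstar) with hyi
      set yj := pHist A Fj rj Oj (vj (mfun nstar)) with hyj
      have htpe1 : TPE A owner i j Fi Fj sistar (φ sistar)
          (subH A Fi yi sistar) (subH A Fj yj (φ sistar)) := by
        rw [hyi, hyj, aux_subH_pHist, aux_subH_pHist,
          (hvjP (mfun nstar) (by omega)).2.1]
        exact aux_tpe A owner i j Fi Fj φ p sistar (mfun nstar)
      have htpe2 : TPE A owner i j Fi Fj s (φ s)
          (subH A Fi yi s) (subH A Fj yj (φ s)) := by
        rw [hyi, hyj, aux_subH_pHist, aux_subH_pHist,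
          (huiP nstar hnstarNI1).2.1]
        have hfix : pcnt A Fj rj Oj (vj (mfun nstar)) (φ s) = nstar := hnstar
        rw [hfix]
        exact aux_tpe A owner i j Fi Fj φ p s nstar
      have hyp : ∀ sj' : Tj, idxj sj' (subH A Fj yj sj')
          ≤ idxj (φ sistar) (subH A Fj yj (φ sistar)) := by
        intro sj'
        have := hrj yj sj'
        rwa [(hvjP (mfun nstar) (by omega)).2.2] at this
      refine hcompat yi yj s hsne htpe1 htpe2 hyp ?_
      intro si''
      have := hri yi si''
      rwa [(huiP nstar hnstarNI1).2.2] at this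

end AuxCore
/-! ### Auxiliary: product measures on finite path spaces -/

set_option linter.unusedSectionVars false

section AuxResample

variable {I β : Type} [Fintype I] [DecidableEq I] [Fintype β] [DecidableEq β]

theorem aux_sum_w (v : β → ℝ) (hv : ∑ b : β, v b = 1) :
    ∑ x : I → β, ∏ q : I, v (x q) = 1 := by
  classical
  have h := Finset.prod_univ_sum (fun _ : I => (Finset.univ : Finset β))
    (fun _ b => v b)
  rw [Fintype.piFinset_univ] at h
  rw [← h]
  simp [hv]

theorem aux_resample (v : β → ℝ) (hv : ∑ b : β, v b = 1)
    (e : (I → β) → I) (Φ : (I → β) → β → ℝ)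
    (hindep : ∀ x x' : I → β, (∀ q, q ≠ e x → x q = x' q) → e x' = e x ∧ Φ x' = Φ x) :
    ∑ x : I → β, (∏ q : I, v (x q)) * Φ x (x (e x))
      = ∑ x : I → β, (∏ q : I, v (x q)) * ∑ b : β, v b * Φ x b := by
  classical
  set T : ((I → β) × β) → ((I → β) × β) :=
    fun z => (Function.update z.1 (e z.1) z.2, z.1 (e z.1)) with hT
  have hupd : ∀ (x : I → β) (b : β), e (Function.update x (e x) b) = e x ∧
      Φ (Function.update x (e x) b) = Φ x := by
    intro x b
    apply hindep
    intro q hq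
    rw [Function.update_apply, if_neg hq]
  have hinv : Function.Involutive T := by
    intro z
    obtain ⟨x, b⟩ := z
    have h1 := (hupd x b).1
    simp only [hT]
    rw [h1]
    refine Prod.ext ?_ ?_
    · show Function.update (Function.update x (e x) b) (e x) (x (e x)) = x
      funext q
      by_cases hq : q = e x
      · subst hq; simp
      · simp [Function.update_apply, hq]
    · show Function.update x (e x) b (e x) = b
      simp
  have hsum : ∀ g : ((I → β) × β) → ℝ, ∑ z : (I → β) × β, g (T z) = ∑ z : (I → β) × β, g z :=
    fun g => Equiv.sum_comp hinv.toPerm g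
  have key : ∑ z : (I → β) × β, (∏ q : I, v (z.1 q)) * (v z.2 * Φ z.1 z.2)
      = ∑ z : (I → β) × β, (∏ q : I, v (z.1 q)) * (v z.2 * Φ z.1 (z.1 (e z.1))) := by
    rw [← hsum (fun z => (∏ q : I, v (z.1 q)) * (v z.2 * Φ z.1 (z.1 (e z.1))))]
    apply Finset.sum_congr rfl
    intro z _
    obtain ⟨x, b⟩ := z
    have h1 := (hupd x b).1
    have h2 := (hupd x b).2
    simp only [hT]
    rw [h1, h2, Function.update_self]
    have hw : ∏ q : I, v (Function.update x (e x) b q)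
        = v b * ∏ q ∈ Finset.univ.erase (e x), v (x q) := by
      have heq : (fun q => v (Function.update x (e x) b q))
          = Function.update (fun q => v (x q)) (e x) (v b) := by
        funext q
        by_cases hq : q = e x
        · subst hq; simp
        · simp [Function.update_apply, hq]
      rw [heq, Finset.prod_update_of_mem (Finset.mem_univ (e x))]
      rw [← Finset.erase_eq]
    have hw2 : v (x (e x)) * ∏ q ∈ Finset.univ.erase (e x), v (x q)
        = ∏ q : I, v (x q) :=
      Finset.mul_prod_erase Finset.univ (fun q => v (x q)) (Finset.mem_univ (e x))
    rw [hw, ← hw2]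
    ring
  calc ∑ x : I → β, (∏ q : I, v (x q)) * Φ x (x (e x))
      = ∑ x : I → β, ∑ b : β, (∏ q : I, v (x q)) * (v b * Φ x (x (e x))) := by
        apply Finset.sum_congr rfl
        intro x _
        rw [← Finset.mul_sum, ← Finset.sum_mul, hv]
        ring
    _ = ∑ z : (I → β) × β, (∏ q : I, v (z.1 q)) * (v z.2 * Φ z.1 (z.1 (e z.1))) := by
        rw [Fintype.sum_prod_type]
    _ = ∑ z : (I → β) × β, (∏ q : I, v (z.1 q)) * (v z.2 * Φ z.1 z.2) := key.symm
    _ = ∑ x : I → β, ∑ b : β, (∏ q : I, v (x q)) * (v b * Φ x b) := by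
        rw [Fintype.sum_prod_type]
    _ = ∑ x : I → β, (∏ q : I, v (x q)) * ∑ b : β, v b * Φ x b := by
        apply Finset.sum_congr rfl
        intro x _
        rw [Finset.mul_sum]

end AuxResample
section AuxMeasure

variable (owner : H → ι) (A : H → Type) [∀ h, Fintype (A h)] [∀ h, DecidableEq (A h)]

/-- A full pure-strategy profile. -/
abbrev ProfT := ∀ k : ι, ∀ h : {h // owner h = k}, A h

/-- The action profile induced by a pure-strategy profile. -/
def profAct (b : ProfT owner A) : ∀ h, A h := fun h => b (owner h) ⟨h, rfl⟩

variable (σ : ∀ k : ι, (∀ h : {h // owner h = k}, A h) → ℝ)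

/-- The probability weight of a pure-strategy profile. -/
def vP (b : ProfT owner A) : ℝ := ∏ k : ι, σ k (b k)

theorem aux_vP_nonneg (hσ0 : ∀ k sk, 0 ≤ σ k sk) (b : ProfT owner A) :
    0 ≤ vP owner A σ b :=
  Finset.prod_nonneg fun k _ => hσ0 k (b k)

theorem aux_sum_vP (hσ1 : ∀ k, ∑ sk, σ k sk = 1) :
    ∑ b : ProfT owner A, vP owner A σ b = 1 := by
  classical
  have h := Finset.prod_univ_sum (fun k : ι => (Finset.univ : Finset (∀ h : {h // owner h = k}, A h)))
    (fun k sk => σ k sk)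
  rw [Fintype.piFinset_univ] at h
  have : ∑ b : ProfT owner A, vP owner A σ b = ∏ k : ι, ∑ sk, σ k sk := by
    rw [h]; rfl
  rw [this]
  simp [hσ1]

variable {S : Type} [Fintype S] [DecidableEq S] (F : S → Finset H)

/-- The observation for strategy `s` extracted from a pure-strategy profile. -/
def mkObsP (b : ProfT owner A) (s : S) : ObsG A F s := fun h => b (owner h.1) ⟨h.1, rfl⟩

theorem aux_marg (s : S) (o : ObsG A F s) :
    ∑ b : ProfT owner A,
      (if mkObsP owner A F b s = o then vP owner A σ b else 0)
      = obsProb owner A σ F s o := by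
  classical
  have hPk : ∀ b : ProfT owner A,
      (∀ k : ι, ∀ (h : H) (hm : h ∈ F s) (hk : owner h = k), b k ⟨h, hk⟩ = o ⟨h, hm⟩)
        ↔ mkObsP owner A F b s = o := by
    intro b
    constructor
    · intro hP
      funext hh
      exact hP (owner hh.1) hh.1 hh.2 rfl
    · intro hb k h hm hk
      subst hk
      exact congrFun hb ⟨h, hm⟩
  rw [obsProb]
  have h := Finset.prod_univ_sum (fun k : ι => (Finset.univ : Finset (∀ h : {h // owner h = k}, A h)))
    (fun k sk => if ∀ (h : H) (hm : h ∈ F s) (hk : owner h = k), sk ⟨h, hk⟩ = o ⟨h, hm⟩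
      then σ k sk else 0)
  rw [Fintype.piFinset_univ] at h
  rw [h]
  apply Finset.sum_congr rfl
  intro b _
  by_cases hb : mkObsP owner A F b s = o
  · rw [if_pos hb]
    have hall := (hPk b).2 hb
    rw [vP]
    apply Finset.prod_congr rfl
    intro k _
    rw [if_pos (fun h hm hk => hall k h hm hk)]
  · rw [if_neg hb]
    have : ¬ ∀ k : ι, ∀ (h : H) (hm : h ∈ F s) (hk : owner h = k), b k ⟨h, hk⟩ = o ⟨h, hm⟩ :=
      fun hc => hb ((hPk b).1 hc)
    push_neg at this
    obtain ⟨k0, h0, hm0, hk0, hne0⟩ := this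
    symm
    apply Finset.prod_eq_zero (Finset.mem_univ k0)
    rw [if_neg]
    push_neg
    exact ⟨h0, hm0, hk0, hne0⟩

theorem aux_marg_sum (s : S) (G0 : ObsG A F s → ℝ) :
    ∑ b : ProfT owner A, vP owner A σ b * G0 (mkObsP owner A F b s)
      = ∑ o : ObsG A F s, obsProb owner A σ F s o * G0 o := by
  classical
  have step1 : ∀ b : ProfT owner A, vP owner A σ b * G0 (mkObsP owner A F b s)
      = ∑ o : ObsG A F s, (if mkObsP owner A F b s = o then vP owner A σ b * G0 o else 0) := by
    intro b
    rw [Finset.sum_ite_eq Finset.univ (mkObsP owner A F b s)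
      (fun o => vP owner A σ b * G0 o)]
    simp
  calc ∑ b : ProfT owner A, vP owner A σ b * G0 (mkObsP owner A F b s)
      = ∑ b : ProfT owner A, ∑ o : ObsG A F s,
          (if mkObsP owner A F b s = o then vP owner A σ b * G0 o else 0) :=
        Finset.sum_congr rfl (fun b _ => step1 b)
    _ = ∑ o : ObsG A F s, ∑ b : ProfT owner A,
          (if mkObsP owner A F b s = o then vP owner A σ b * G0 o else 0) := Finset.sum_comm
    _ = ∑ o : ObsG A F s, (∑ b : ProfT owner A,
          (if mkObsP owner A F b s = o then vP owner A σ b else 0)) * G0 o := by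
        apply Finset.sum_congr rfl
        intro o _
        rw [Finset.sum_mul]
        apply Finset.sum_congr rfl
        intro b _
        by_cases hb : mkObsP owner A F b s = o
        · rw [if_pos hb, if_pos hb]
        · rw [if_neg hb, if_neg hb, zero_mul]
    _ = ∑ o : ObsG A F s, obsProb owner A σ F s o * G0 o := by
        apply Finset.sum_congr rfl
        intro o _
        rw [aux_marg]

end AuxMeasure
section AuxIdent

variable (owner : H → ι) (A : H → Type) [∀ h, Fintype (A h)] [∀ h, DecidableEq (A h)]
variable (σ : ∀ k : ι, (∀ h : {h // owner h = k}, A h) → ℝ)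
variable {S : Type} [Fintype S] [DecidableEq S] (F : S → Finset H) (r : HistG A F → S)
variable {C : Type} [Fintype C] [DecidableEq C]

/-- The observation functions read off a response path through a reindexing `ψ`. -/
def OOf (ψ : S → C) (p : ℕ → C → (∀ h, A h)) : ∀ s : S, ℕ → ObsG A F s :=
  fun s n => fun h => p n (ψ s) h.1

/-- Extend a finite-horizon path of pure-strategy profiles to an infinite action path. -/
def extPath (b₀ : ProfT owner A) (T : ℕ) (x : (Fin T × C) → ProfT owner A) :
    ℕ → C → (∀ h, A h) :=
  fun n c => if hn : n < T then profAct owner A (x (⟨n, hn⟩, c)) else profAct owner A b₀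

theorem aux_depOn (ψ : S → C) (p p' : ℕ → C → (∀ h, A h)) :
    ∀ t, (∀ s n, n < pcnt A F r (OOf A F ψ p) t s → p n (ψ s) = p' n (ψ s)) →
      pHist A F r (OOf A F ψ p) t = pHist A F r (OOf A F ψ p') t := by
  intro t
  induction t with
  | zero => intro _; rfl
  | succ t ih =>
      intro hyp
      have hmono : ∀ s, pcnt A F r (OOf A F ψ p) t s ≤ pcnt A F r (OOf A F ψ p) (t+1) s :=
        fun s => aux_pcnt_mono A F r (OOf A F ψ p) s (Nat.le_succ t)
      have hEq : pHist A F r (OOf A F ψ p) t = pHist A F r (OOf A F ψ p') t :=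
        ih (fun s n hn => hyp s n (lt_of_lt_of_le hn (hmono s)))
      set yp := pHist A F r (OOf A F ψ p) t with hyp_def
      have hL : pcnt A F r (OOf A F ψ p) t (r yp) < pcnt A F r (OOf A F ψ p) (t+1) (r yp) := by
        rw [aux_pcnt_succ, if_pos rfl]
        omega
      have hobs : OOf A F ψ p (r yp) (pcnt A F r (OOf A F ψ p) t (r yp))
          = OOf A F ψ p' (r yp) (pcnt A F r (OOf A F ψ p) t (r yp)) := by
        funext h
        exact congrFun (hyp (r yp) _ hL) h.1
      show (⟨r yp, OOf A F ψ p (r yp) (subH A F yp (r yp)).length⟩ : Σ s : S, ObsG A F s) :: yp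
          = (⟨r (pHist A F r (OOf A F ψ p') t),
              OOf A F ψ p' (r (pHist A F r (OOf A F ψ p') t))
                (subH A F (pHist A F r (OOf A F ψ p') t) (r (pHist A F r (OOf A F ψ p') t))).length⟩
              : Σ s : S, ObsG A F s) :: pHist A F r (OOf A F ψ p') t
      rw [← hEq]
      have : (subH A F yp (r yp)).length = pcnt A F r (OOf A F ψ p) t (r yp) := rfl
      rw [this, hobs]

theorem aux_Hists_sum (f : HistG A F → ℝ) (t : ℕ) :
    ∑ y ∈ Hists A F r (t+1), f y
      = ∑ y ∈ Hists A F r t, ∑ o : ObsG A F (r y), f ((⟨r y, o⟩ : Σ s : S, ObsG A F s) :: y) := by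
  classical
  show ∑ y ∈ (Hists A F r t).biUnion
      (fun y => Finset.univ.image fun o : ObsG A F (r y) => (⟨r y, o⟩ : Σ s : S, ObsG A F s) :: y),
      f y = _
  rw [Finset.sum_biUnion]
  · apply Finset.sum_congr rfl
    intro y _
    rw [Finset.sum_image]
    intro o _ o' _ heq
    have h2 : (⟨r y, o⟩ : Σ s : S, ObsG A F s) = ⟨r y, o'⟩ := (List.cons.injEq _ _ _ _ ▸ heq).1
    have := (Sigma.mk.inj_iff.1 h2).2
    exact eq_of_heq this
  · intro y1 hy1 y2 hy2 hne
    apply Finset.disjoint_left.2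
    intro z hz1 hz2
    simp only [Finset.mem_image, Finset.mem_univ, true_and] at hz1 hz2
    obtain ⟨o1, rfl⟩ := hz1
    obtain ⟨o2, hz2'⟩ := hz2
    have : y2 = y1 := (List.cons.injEq _ _ _ _ ▸ hz2').2
    exact hne this.symm

theorem aux_histProb_cons (y : HistG A F) (o : ObsG A F (r y)) :
    histProb owner A σ F r ((⟨r y, o⟩ : Σ s : S, ObsG A F s) :: y)
      = obsProb owner A σ F (r y) o * histProb owner A σ F r y := by
  show (if r y = r y then obsProb owner A σ F (r y) o else 0) * histProb owner A σ F r y = _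
  rw [if_pos rfl]

end AuxIdent
section AuxIdent2

variable (owner : H → ι) (A : H → Type) [∀ h, Fintype (A h)] [∀ h, DecidableEq (A h)]
variable (σ : ∀ k : ι, (∀ h : {h // owner h = k}, A h) → ℝ)
variable {S : Type} [Fintype S] [DecidableEq S] (F : S → Finset H) (r : HistG A F → S)
variable {C : Type} [Fintype C] [DecidableEq C]

/-- Main identity: the expected value of any history functional computed from the
i.i.d.-draw history measure equals its expectation under the coupled path measure. -/
theorem aux_ident (ψ : S → C) (hψ : Function.Injective ψ) (b₀ : ProfT owner A)
    (hσ0 : ∀ k sk, 0 ≤ σ k sk) (hσ1 : ∀ k, ∑ sk, σ k sk = 1) (T : ℕ) :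
    ∀ t, t ≤ T → ∀ G : HistG A F → ℝ,
      ∑ x : (Fin T × C) → ProfT owner A, (∏ q : Fin T × C, vP owner A σ (x q)) *
          G (pHist A F r (OOf A F ψ (extPath owner A b₀ T x)) t)
        = ∑ y ∈ Hists A F r t, histProb owner A σ F r y * G y := by
  intro t
  induction t with
  | zero =>
      intro _ G
      have h1 : ∑ x : (Fin T × C) → ProfT owner A, (∏ q : Fin T × C, vP owner A σ (x q)) = 1 :=
        aux_sum_w (vP owner A σ) (aux_sum_vP owner A σ hσ1)
      calc ∑ x : (Fin T × C) → ProfT owner A, (∏ q : Fin T × C, vP owner A σ (x q)) * G [] 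
          = (∑ x : (Fin T × C) → ProfT owner A, (∏ q : Fin T × C, vP owner A σ (x q))) * G [] :=
            (Finset.sum_mul _ _ _).symm
        _ = G [] := by rw [h1, one_mul]
        _ = ∑ y ∈ Hists A F r 0, histProb owner A σ F r y * G y := by
            show G [] = ∑ y ∈ ({([] : HistG A F)} : Finset (HistG A F)), _
            rw [Finset.sum_singleton]
            show G [] = histProb owner A σ F r [] * G []
            have h2 : histProb owner A σ F r [] = 1 := rfl
            rw [h2, one_mul]
  | succ t ih =>
      intro htT G
      have htT' : t ≤ T := le_trans (Nat.le_succ t) htT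
      -- abbreviations
      set Y : ((Fin T × C) → ProfT owner A) → HistG A F :=
        fun x => pHist A F r (OOf A F ψ (extPath owner A b₀ T x)) t with hY
      have hTlt : ∀ x, pcnt A F r (OOf A F ψ (extPath owner A b₀ T x)) t (r (Y x)) < T :=
        fun x => lt_of_le_of_lt (aux_pcnt_le A F r _ t _) (by omega)
      set e : ((Fin T × C) → ProfT owner A) → (Fin T × C) :=
        fun x => (⟨pcnt A F r (OOf A F ψ (extPath owner A b₀ T x)) t (r (Y x)), hTlt x⟩,
          ψ (r (Y x))) with he
      set Φ : ((Fin T × C) → ProfT owner A) → ProfT owner A → ℝ :=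
        fun x b => G ((⟨r (Y x), mkObsP owner A F b (r (Y x))⟩ : Σ s : S, ObsG A F s) :: Y x)
          with hΦ
      -- independence of the fresh coordinate
      have hindep : ∀ x x', (∀ q, q ≠ e x → x q = x' q) → e x' = e x ∧ Φ x' = Φ x := by
        intro x x' hagree
        have hYY : Y x' = Y x := by
          symm
          apply aux_depOn A F r ψ
          intro s n hn
          have hnT : n < T :=
            lt_of_le_of_lt (le_of_lt (lt_of_lt_of_le hn (aux_pcnt_le A F r _ t s))) (by omega)
          show extPath owner A b₀ T x n (ψ s) = extPath owner A b₀ T x' n (ψ s)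
          simp only [extPath]
          rw [dif_pos hnT, dif_pos hnT]
          have hq : ((⟨n, hnT⟩ : Fin T), ψ s) ≠ e x := by
            intro hq
            rw [he] at hq
            have h1 : n = pcnt A F r (OOf A F ψ (extPath owner A b₀ T x)) t (r (Y x)) := by
              have := congrArg (fun z => (z.1 : ℕ)) hq
              simpa using this
            have h2 : s = r (Y x) := hψ (by
              have := congrArg Prod.snd hq
              simpa using this)
            rw [h2] at hn
            omega
          rw [hagree _ hq]
        have hcnt : pcnt A F r (OOf A F ψ (extPath owner A b₀ T x')) t
            = pcnt A F r (OOf A F ψ (extPath owner A b₀ T x)) t := by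
          funext s
          show (subH A F (Y x') s).length = (subH A F (Y x) s).length
          rw [hYY]
        constructor
        · rw [he]
          have h1 : r (Y x') = r (Y x) := by rw [hYY]
          refine Prod.ext ?_ ?_
          · apply Fin.ext
            show pcnt A F r (OOf A F ψ (extPath owner A b₀ T x')) t (r (Y x'))
              = pcnt A F r (OOf A F ψ (extPath owner A b₀ T x)) t (r (Y x))
            rw [hcnt, h1]
          · show ψ (r (Y x')) = ψ (r (Y x))
            rw [h1]
        · funext b
          rw [hΦ]
          show G (_ :: Y x') = G (_ :: Y x)
          rw [hYY]
      -- the new period reads the fresh coordinate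
      have hstep : ∀ x, G (pHist A F r (OOf A F ψ (extPath owner A b₀ T x)) (t+1))
          = Φ x (x (e x)) := by
        intro x
        have hofs : OOf A F ψ (extPath owner A b₀ T x) (r (Y x))
            (subH A F (Y x) (r (Y x))).length = mkObsP owner A F (x (e x)) (r (Y x)) := by
          funext h
          show extPath owner A b₀ T x ((subH A F (Y x) (r (Y x))).length) (ψ (r (Y x))) h.1
            = (x (e x)) (owner h.1) ⟨h.1, rfl⟩
          have hlen : (subH A F (Y x) (r (Y x))).length
              = pcnt A F r (OOf A F ψ (extPath owner A b₀ T x)) t (r (Y x)) := rfl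
          simp only [extPath]
          rw [hlen, dif_pos (hTlt x)]
          rfl
        show G ((⟨r (Y x), _⟩ : Σ s : S, ObsG A F s) :: Y x) = _
        rw [hΦ]
        congr 1
        rw [← hofs]
      -- resample the fresh coordinate
      have hres := aux_resample (vP owner A σ) (aux_sum_vP owner A σ hσ1) e Φ hindep
      -- marginalize the fresh observation
      have hmarg : ∀ x, (∑ b : ProfT owner A, vP owner A σ b * Φ x b)
          = ∑ o : ObsG A F (r (Y x)), obsProb owner A σ F (r (Y x)) o *
              G ((⟨r (Y x), o⟩ : Σ s : S, ObsG A F s) :: Y x) :=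
        fun x => aux_marg_sum owner A σ F (r (Y x))
          (fun o => G ((⟨r (Y x), o⟩ : Σ s : S, ObsG A F s) :: Y x))
      -- assemble
      calc ∑ x : (Fin T × C) → ProfT owner A, (∏ q : Fin T × C, vP owner A σ (x q)) *
              G (pHist A F r (OOf A F ψ (extPath owner A b₀ T x)) (t+1))
          = ∑ x : (Fin T × C) → ProfT owner A, (∏ q : Fin T × C, vP owner A σ (x q)) *
              Φ x (x (e x)) := by
            apply Finset.sum_congr rfl
            intro x _
            rw [hstep x]
        _ = ∑ x : (Fin T × C) → ProfT owner A, (∏ q : Fin T × C, vP owner A σ (x q)) *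
              ∑ b : ProfT owner A, vP owner A σ b * Φ x b := hres
        _ = ∑ x : (Fin T × C) → ProfT owner A, (∏ q : Fin T × C, vP owner A σ (x q)) *
              (∑ o : ObsG A F (r (Y x)), obsProb owner A σ F (r (Y x)) o *
                G ((⟨r (Y x), o⟩ : Σ s : S, ObsG A F s) :: Y x)) := by
            apply Finset.sum_congr rfl
            intro x _
            rw [hmarg x]
        _ = ∑ y ∈ Hists A F r t, histProb owner A σ F r y *
              (∑ o : ObsG A F (r y), obsProb owner A σ F (r y) o *
                G ((⟨r y, o⟩ : Σ s : S, ObsG A F s) :: y)) :=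
            ih htT' (fun y => ∑ o : ObsG A F (r y), obsProb owner A σ F (r y) o *
              G ((⟨r y, o⟩ : Σ s : S, ObsG A F s) :: y))
        _ = ∑ y ∈ Hists A F r (t+1), histProb owner A σ F r y * G y := by
            rw [aux_Hists_sum A F r (fun y => histProb owner A σ F r y * G y) t]
            apply Finset.sum_congr rfl
            intro y _
            rw [Finset.mul_sum]
            apply Finset.sum_congr rfl
            intro o _
            rw [aux_histProb_cons]
            ring

end AuxIdent2
section AuxIndSum

variable (A : H → Type) [∀ h, Fintype (A h)] [∀ h, DecidableEq (A h)]
variable {S : Type} [DecidableEq S] (F : S → Finset H) (r : HistG A F → S)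

theorem aux_ind_sum (O : ∀ s : S, ℕ → ObsG A F s) (s : S) :
    ∀ T, (∑ t ∈ Finset.range T, (if r (pHist A F r O t) = s then (1:ℝ) else 0))
      = (pcnt A F r O T s : ℝ) := by
  intro T
  induction T with
  | zero => simp [aux_pcnt_zero]
  | succ T ih =>
      rw [Finset.sum_range_succ, ih, aux_pcnt_succ]
      by_cases h : r (pHist A F r O T) = s
      · rw [if_pos h, if_pos h]; push_cast; ring
      · rw [if_neg h, if_neg h]; push_cast; ring

end AuxIndSum


/-- Proposition: if the index policy `r_i` is more compatible with `s_i*` than `r_j` is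
with `s_j*` (under isomorphic factoring with `φ s_i* = s_j*`), then for any survival
probability `0 ≤ γ < 1` and any mixed strategy profile `σ`, the induced responses
satisfy `φ_i(s_i*; r_i, σ₋ᵢ) ≥ φ_j(s_j*; r_j, σ₋ⱼ)`. -/
theorem induced_response_respects_compatibility
    (owner : H → ι) (A : H → Type) [∀ h, Fintype (A h)] [∀ h, DecidableEq (A h)]
    (payoff : ι → (∀ h, A h) → ℝ)
    (i j : ι) (hij : i ≠ j)
    (Fi : (∀ h : {h // owner h = i}, A h) → Finset H)
    (Fj : (∀ h : {h // owner h = j}, A h) → Finset H)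
    (hFiOwner : ∀ si h, h ∈ Fi si → owner h ≠ i)
    (hFiMeas : ∀ si (so so' : ∀ h : {h // owner h ≠ i}, A h),
      payoff i (combine owner A i si so) = payoff i (combine owner A i si so') ↔
        ∀ (h : H), h ∈ Fi si → ∀ (hne : owner h ≠ i), so ⟨h, hne⟩ = so' ⟨h, hne⟩)
    (hFiDisj : ∀ si si', si ≠ si' → Disjoint (Fi si) (Fi si'))
    (hFjOwner : ∀ sj h, h ∈ Fj sj → owner h ≠ j)
    (hFjMeas : ∀ sj (so so' : ∀ h : {h // owner h ≠ j}, A h),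
      payoff j (combine owner A j sj so) = payoff j (combine owner A j sj so') ↔
        ∀ (h : H), h ∈ Fj sj → ∀ (hne : owner h ≠ j), so ⟨h, hne⟩ = so' ⟨h, hne⟩)
    (hFjDisj : ∀ sj sj', sj ≠ sj' → Disjoint (Fj sj) (Fj sj'))
    (φ : (∀ h : {h // owner h = i}, A h) ≃ (∀ h : {h // owner h = j}, A h))
    (hiso : ∀ si (h : H), owner h ≠ i → owner h ≠ j → (h ∈ Fi si ↔ h ∈ Fj (φ si)))
    (sistar : ∀ h : {h // owner h = i}, A h) (sjstar : ∀ h : {h // owner h = j}, A h)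
    (hφstar : φ sistar = sjstar)
    (idxi : ∀ s, List (ObsG A Fi s) → ℝ) (ri : HistG A Fi → _)
    (hri : IsIndexPolicy A Fi idxi ri)
    (idxj : ∀ s, List (ObsG A Fj s) → ℝ) (rj : HistG A Fj → _)
    (hrj : IsIndexPolicy A Fj idxj rj)
    (hcompat : PolicyMoreCompat A owner i j Fi Fj φ idxi idxj sistar sjstar)
    -- the common learning environment: a mixed strategy profile
    (σ : ∀ k : ι, (∀ h : {h // owner h = k}, A h) → ℝ)
    (hσ : ∀ k, (∀ sk, 0 ≤ σ k sk) ∧ ∑ sk, σ k sk = 1)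
    (γ : ℝ) (hγ0 : 0 ≤ γ) (hγ1 : γ < 1) :
    inducedResp owner A σ Fj rj γ sjstar ≤ inducedResp owner A σ Fi ri γ sistar := by
  classical
  have hσ0 : ∀ k sk, 0 ≤ σ k sk := fun k => (hσ k).1
  have hσ1 : ∀ k, ∑ sk, σ k sk = 1 := fun k => (hσ k).2
  -- strategy sets are nonempty
  have hneK : ∀ k : ι, Nonempty (∀ h : {h // owner h = k}, A h) := by
    intro k
    by_contra hk
    rw [not_nonempty_iff] at hk
    have h0 : ∑ sk : (∀ h : {h // owner h = k}, A h), σ k sk = 0 := by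
      rw [Finset.univ_eq_empty, Finset.sum_empty]
    rw [hσ1 k] at h0
    exact one_ne_zero h0
  set b₀ : ProfT owner A := fun k => Classical.choice (hneK k) with hb₀
  -- per-period play probabilities
  set Pi : ℕ → ℝ := fun t => ∑ y ∈ Hists A Fi ri t,
    histProb owner A σ Fi ri y * (if ri y = sistar then 1 else 0) with hPidef
  set Pj : ℕ → ℝ := fun t => ∑ y ∈ Hists A Fj rj t,
    histProb owner A σ Fj rj y * (if rj y = sjstar then 1 else 0) with hPjdef
  -- path-space representations
  have hidI : ∀ T t, t ≤ T → Pi t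
      = ∑ x : (Fin T × (∀ h : {h // owner h = i}, A h)) → ProfT owner A,
          (∏ q, vP owner A σ (x q)) *
          (if ri (pHist A Fi ri (OOf A Fi id (extPath owner A b₀ T x)) t) = sistar
            then 1 else 0) := by
    intro T t ht
    exact (aux_ident owner A σ Fi ri id Function.injective_id b₀ hσ0 hσ1 T t ht
      (fun y => if ri y = sistar then 1 else 0)).symm
  have hidJ : ∀ T t, t ≤ T → Pj t
      = ∑ x : (Fin T × (∀ h : {h // owner h = i}, A h)) → ProfT owner A,
          (∏ q, vP owner A σ (x q)) *
          (if rj (pHist A Fj rj (OOf A Fj (fun s' => φ.symm s') (extPath owner A b₀ T x)) t)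
            = sjstar then 1 else 0) := by
    intro T t ht
    exact (aux_ident owner A σ Fj rj (fun s' => φ.symm s') φ.symm.injective b₀ hσ0 hσ1 T t ht
      (fun y => if rj y = sjstar then 1 else 0)).symm
  have hwnn : ∀ (T : ℕ) (x : (Fin T × (∀ h : {h // owner h = i}, A h)) → ProfT owner A),
      0 ≤ ∏ q, vP owner A σ (x q) :=
    fun T x => Finset.prod_nonneg fun q _ => aux_vP_nonneg owner A σ hσ0 (x q)
  -- bounds
  have hPiB : ∀ t, 0 ≤ Pi t ∧ Pi t ≤ 1 := by
    intro t
    rw [hidI t t le_rfl]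
    constructor
    · apply Finset.sum_nonneg
      intro x _
      apply mul_nonneg (hwnn t x)
      split <;> norm_num
    · calc ∑ x : (Fin t × (∀ h : {h // owner h = i}, A h)) → ProfT owner A,
            (∏ q, vP owner A σ (x q)) * _
          ≤ ∑ x : (Fin t × (∀ h : {h // owner h = i}, A h)) → ProfT owner A,
            (∏ q, vP owner A σ (x q)) := by
            apply Finset.sum_le_sum
            intro x _
            have h1 := hwnn t x
            split <;> nlinarith
      _ = 1 := aux_sum_w (vP owner A σ) (aux_sum_vP owner A σ hσ1)
  have hPjB : ∀ t, 0 ≤ Pj t ∧ Pj t ≤ 1 := by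
    intro t
    rw [hidJ t t le_rfl]
    constructor
    · apply Finset.sum_nonneg
      intro x _
      apply mul_nonneg (hwnn t x)
      split <;> norm_num
    · calc ∑ x : (Fin t × (∀ h : {h // owner h = i}, A h)) → ProfT owner A,
            (∏ q, vP owner A σ (x q)) * _
          ≤ ∑ x : (Fin t × (∀ h : {h // owner h = i}, A h)) → ProfT owner A,
            (∏ q, vP owner A σ (x q)) := by
            apply Finset.sum_le_sum
            intro x _
            have h1 := hwnn t x
            split <;> nlinarith
      _ = 1 := aux_sum_w (vP owner A σ) (aux_sum_vP owner A σ hσ1)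
  -- summability
  have hgeo : Summable (fun t : ℕ => γ ^ t) := summable_geometric_of_lt_one hγ0 hγ1
  have hsumI : Summable (fun t => γ ^ t * Pi t) :=
    Summable.of_nonneg_of_le
      (fun t => mul_nonneg (pow_nonneg hγ0 t) (hPiB t).1)
      (fun t => by have := (hPiB t).2; nlinarith [pow_nonneg hγ0 t]) hgeo
  have hsumJ : Summable (fun t => γ ^ t * Pj t) :=
    Summable.of_nonneg_of_le
      (fun t => mul_nonneg (pow_nonneg hγ0 t) (hPjB t).1)
      (fun t => by have := (hPjB t).2; nlinarith [pow_nonneg hγ0 t]) hgeo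
  -- partial-sum comparison via the coupling
  have hpartial : ∀ T, ∑ t ∈ Finset.range T, γ ^ t * Pj t
      ≤ ∑ t ∈ Finset.range T, γ ^ t * Pi t := by
    intro T
    have hswapI : ∑ t ∈ Finset.range T, γ ^ t * Pi t
        = ∑ x : (Fin T × (∀ h : {h // owner h = i}, A h)) → ProfT owner A,
            (∏ q, vP owner A σ (x q)) * ∑ t ∈ Finset.range T, γ ^ t *
            (if ri (pHist A Fi ri (OOf A Fi id (extPath owner A b₀ T x)) t) = sistar
              then 1 else 0) := by
      calc ∑ t ∈ Finset.range T, γ ^ t * Pi t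
          = ∑ t ∈ Finset.range T,
              ∑ x : (Fin T × (∀ h : {h // owner h = i}, A h)) → ProfT owner A,
              γ ^ t * ((∏ q, vP owner A σ (x q)) *
              (if ri (pHist A Fi ri (OOf A Fi id (extPath owner A b₀ T x)) t) = sistar
                then 1 else 0)) := by
            apply Finset.sum_congr rfl
            intro t ht
            rw [hidI T t (le_of_lt (Finset.mem_range.1 ht)), Finset.mul_sum]
        _ = ∑ x : (Fin T × (∀ h : {h // owner h = i}, A h)) → ProfT owner A,
              ∑ t ∈ Finset.range T, γ ^ t * ((∏ q, vP owner A σ (x q)) *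
              (if ri (pHist A Fi ri (OOf A Fi id (extPath owner A b₀ T x)) t) = sistar
                then 1 else 0)) := Finset.sum_comm
        _ = _ := by
            apply Finset.sum_congr rfl
            intro x _
            rw [Finset.mul_sum]
            apply Finset.sum_congr rfl
            intro t _
            ring
    have hswapJ : ∑ t ∈ Finset.range T, γ ^ t * Pj t
        = ∑ x : (Fin T × (∀ h : {h // owner h = i}, A h)) → ProfT owner A,
            (∏ q, vP owner A σ (x q)) * ∑ t ∈ Finset.range T, γ ^ t *
            (if rj (pHist A Fj rj (OOf A Fj (fun s' => φ.symm s') (extPath owner A b₀ T x)) t)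
              = sjstar then 1 else 0) := by
      calc ∑ t ∈ Finset.range T, γ ^ t * Pj t
          = ∑ t ∈ Finset.range T,
              ∑ x : (Fin T × (∀ h : {h // owner h = i}, A h)) → ProfT owner A,
              γ ^ t * ((∏ q, vP owner A σ (x q)) *
              (if rj (pHist A Fj rj (OOf A Fj (fun s' => φ.symm s')
                (extPath owner A b₀ T x)) t) = sjstar then 1 else 0)) := by
            apply Finset.sum_congr rfl
            intro t ht
            rw [hidJ T t (le_of_lt (Finset.mem_range.1 ht)), Finset.mul_sum]
        _ = ∑ x : (Fin T × (∀ h : {h // owner h = i}, A h)) → ProfT owner A,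
              ∑ t ∈ Finset.range T, γ ^ t * ((∏ q, vP owner A σ (x q)) *
              (if rj (pHist A Fj rj (OOf A Fj (fun s' => φ.symm s')
                (extPath owner A b₀ T x)) t) = sjstar then 1 else 0)) := Finset.sum_comm
        _ = _ := by
            apply Finset.sum_congr rfl
            intro x _
            rw [Finset.mul_sum]
            apply Finset.sum_congr rfl
            intro t _
            ring
    rw [hswapI, hswapJ]
    apply Finset.sum_le_sum
    intro x _
    apply mul_le_mul_of_nonneg_left _ (hwnn T x)
    -- pathwise discounted comparison via the core coupling lemma
    apply aux_abel γ hγ0 (le_of_lt hγ1)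
    intro T'
    rw [aux_ind_sum A Fi ri _ sistar T', aux_ind_sum A Fj rj _ sjstar T']
    have hcore := aux_core A owner i j Fi Fj φ sistar sjstar idxi ri idxj rj hφstar
      hri hrj hcompat (extPath owner A b₀ T x) T'
    have hOi : OiOf A Fi (extPath owner A b₀ T x)
        = OOf A Fi id (extPath owner A b₀ T x) := rfl
    have hOj : OjOf A Fj φ (extPath owner A b₀ T x)
        = OOf A Fj (fun s' => φ.symm s') (extPath owner A b₀ T x) := rfl
    rw [hOi, hOj] at hcore
    exact_mod_cast hcore
  -- pass to the limit
  have htendI := hsumI.hasSum.tendsto_sum_nat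
  have htendJ := hsumJ.hasSum.tendsto_sum_nat
  have htsum : (∑' t, γ ^ t * Pj t) ≤ ∑' t, γ ^ t * Pi t :=
    le_of_tendsto_of_tendsto' htendJ htendI hpartial
  show (1 - γ) * _ ≤ (1 - γ) * _
  apply mul_le_mul_of_nonneg_left _ (by linarith : (0:ℝ) ≤ 1 - γ)
  exact htsum

end
end

section
/- The value of the auxiliary stopping problem defining the Gittins index of strategy s_i under any stopping rule τ equals the expected stage-game payoff of playing s_i against the synthetic correlated profile: V(τ; s_i, ν_{s_i}) = U_i(s_i, α(ν_{s_i}, τ)), and the synthetic correlated profile α(ν_{s_i}, τ) is totally mixed whenever the belief ν_{s_i} has full support. -/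
open scoped Classical
open MeasureTheory

noncomputable section

variable {ι H : Type} [Fintype ι] [DecidableEq ι] [Fintype H] [DecidableEq H]

section GittinsDefs

variable (A : H → Type) [∀ h, Fintype (A h)] [∀ h, DecidableEq (A h)] [∀ h, Nonempty (A h)]

/-- A profile of actions at the information sets in `Fs`. -/
abbrev ProfOn (Fs : Finset H) : Type := ∀ h : {h // h ∈ Fs}, A h.1

/-- The probability, in the auxiliary stopping problem with belief `ν` (an independent
belief over the mixed actions at each information set in `Fs`, with the realized mixed
profile drawn once and observations i.i.d. thereafter) and stopping rule `τ`, that the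
stopping time is at least `t+1` and the period-`(t+1)` observation equals `prof`. -/
def pProb {Fs : Finset H}
    (ν : ∀ h : {h // h ∈ Fs}, Measure (A h.1 → ℝ)) [∀ h, SigmaFinite (ν h)]
    (τ : List (ProfOn A Fs) → Bool) (t : ℕ) (prof : ProfOn A Fs) : ℝ :=
  ∫ α, (∑ pre : Fin t → ProfOn A Fs,
    if ∀ u, 1 ≤ u → u ≤ t → τ ((List.ofFn pre).take u) = false then
      (∏ u, ∏ h, α h (pre u h)) * ∏ h, α h (prof h)
    else 0) ∂(Measure.pi ν)

/-- The probability that the stopping time is at least `t+1`. -/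
def surv {Fs : Finset H}
    (ν : ∀ h : {h // h ∈ Fs}, Measure (A h.1 → ℝ)) [∀ h, SigmaFinite (ν h)]
    (τ : List (ProfOn A Fs) → Bool) (t : ℕ) : ℝ :=
  ∑ prof : ProfOn A Fs, pProb A ν τ t prof

/-- The synthetic correlated profile `α(ν, τ)` induced by belief `ν` and stopping
rule `τ` at effective discount factor `β`. -/
def synth {Fs : Finset H} (β : ℝ)
    (ν : ∀ h : {h // h ∈ Fs}, Measure (A h.1 → ℝ)) [∀ h, SigmaFinite (ν h)]
    (τ : List (ProfOn A Fs) → Bool) (prof : ProfOn A Fs) : ℝ :=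
  (∑' t : ℕ, β ^ t * pProb A ν τ t prof) / (∑' t : ℕ, β ^ t * surv A ν τ t)

/-- The normalized discounted value of the auxiliary stopping problem under the
stopping rule `τ`, where `Up prof` is the stage payoff when `prof` is observed. -/
def Vval {Fs : Finset H} (β : ℝ)
    (ν : ∀ h : {h // h ∈ Fs}, Measure (A h.1 → ℝ)) [∀ h, SigmaFinite (ν h)]
    (τ : List (ProfOn A Fs) → Bool) (Up : ProfOn A Fs → ℝ) : ℝ :=
  (∑' t : ℕ, β ^ t * ∑ prof : ProfOn A Fs, pProb A ν τ t prof * Up prof) /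
    (∑' t : ℕ, β ^ t * surv A ν τ t)

/-- Player `i`'s stage-game payoff from playing `si` when the opponents' actions at the
`si`-relevant information sets `Fsi` are given by `prof` (by factorability, the payoff
does not depend on the actions elsewhere). -/
def UpayOf (owner : H → ι) (payoff : ι → (∀ h, A h) → ℝ) (i : ι)
    (Fsi : Finset H) (si : ∀ h : {h // owner h = i}, A h) (prof : ProfOn A Fsi) : ℝ :=
  payoff i fun h =>
    if hh : owner h = i then si ⟨h, hh⟩
    else if hm : h ∈ Fsi then prof ⟨h, hm⟩ else Classical.arbitrary (A h)

/-- A measure on the space of mixed actions has full support on the simplex. -/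
def FullSupportMeas {X : Type} [Fintype X] (μ : Measure (X → ℝ)) : Prop :=
  ∀ u : Set (X → ℝ), IsOpen u →
    (u ∩ {α : X → ℝ | (∀ a, 0 ≤ α a) ∧ ∑ a, α a = 1}).Nonempty → 0 < μ u

end GittinsDefs

section Aux

variable (A : H → Type) [∀ h, Fintype (A h)] [∀ h, DecidableEq (A h)] [∀ h, Nonempty (A h)]
variable {Fs : Finset H}

/-- the integrand in `pProb` -/
def integrand (τ : List (ProfOn A Fs) → Bool) (t : ℕ) (prof : ProfOn A Fs)
    (α : ∀ h : {h // h ∈ Fs}, A h.1 → ℝ) : ℝ :=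
  ∑ pre : Fin t → ProfOn A Fs,
    if ∀ u, 1 ≤ u → u ≤ t → τ ((List.ofFn pre).take u) = false then
      (∏ u, ∏ h, α h (pre u h)) * ∏ h, α h (prof h)
    else 0

lemma integrand_meas (τ : List (ProfOn A Fs) → Bool) (t : ℕ) (prof : ProfOn A Fs) :
    Measurable (integrand A τ t prof) := by
  apply Finset.measurable_sum
  intro pre _
  split
  · apply Measurable.mul
    · apply Finset.measurable_prod
      intro u _
      apply Finset.measurable_prod
      intro h _
      exact (measurable_pi_apply (pre u h)).comp (measurable_pi_apply h)
    · apply Finset.measurable_prod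
      intro h _
      exact (measurable_pi_apply (prof h)).comp (measurable_pi_apply h)
  · exact measurable_const

/-- pointwise simplex condition -/
def Simp {X : Type} [Fintype X] (x : X → ℝ) : Prop := (∀ a, 0 ≤ x a) ∧ ∑ a, x a = 1

lemma integrand_nonneg (τ : List (ProfOn A Fs) → Bool) (t : ℕ) (prof : ProfOn A Fs)
    (α : ∀ h : {h // h ∈ Fs}, A h.1 → ℝ) (hα : ∀ h, Simp (α h)) :
    0 ≤ integrand A τ t prof α := by
  apply Finset.sum_nonneg
  intro pre _
  split
  · exact mul_nonneg (Finset.prod_nonneg fun u _ => Finset.prod_nonneg fun h _ => (hα h).1 _)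
      (Finset.prod_nonneg fun h _ => (hα h).1 _)
  · exact le_refl _

lemma integrand_le_one (τ : List (ProfOn A Fs) → Bool) (t : ℕ) (prof : ProfOn A Fs)
    (α : ∀ h : {h // h ∈ Fs}, A h.1 → ℝ) (hα : ∀ h, Simp (α h)) :
    integrand A τ t prof α ≤ 1 := by
  have hle1 : ∀ h (a : A h.1), α h a ≤ 1 := by
    intro h a
    calc α h a ≤ ∑ b, α h b := Finset.single_le_sum (fun b _ => (hα h).1 b) (Finset.mem_univ a)
    _ = 1 := (hα h).2
  have key : integrand A τ t prof α ≤
      (∑ pre : Fin t → ProfOn A Fs, ∏ u, ∏ h, α h (pre u h)) * ∏ h, α h (prof h) := by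
    rw [Finset.sum_mul]
    apply Finset.sum_le_sum
    intro pre _
    split
    · exact le_refl _
    · exact mul_nonneg (Finset.prod_nonneg fun u _ => Finset.prod_nonneg fun h _ => (hα h).1 _)
        (Finset.prod_nonneg fun h _ => (hα h).1 _)
  have hsum : (∑ pre : Fin t → ProfOn A Fs, ∏ u, ∏ h, α h (pre u h)) = 1 := by
    rw [← Fintype.prod_sum (κ := fun _ : Fin t => ProfOn A Fs) (fun _ p => ∏ h, α h (p h))]
    have hone : (∑ p : ProfOn A Fs, ∏ h, α h (p h)) = 1 := by
      rw [← Fintype.prod_sum (κ := fun h : {h // h ∈ Fs} => A h.1) (fun h a => α h a)]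
      simp [(hα _).2]
    simp only [hone, Finset.prod_const_one]
  calc integrand A τ t prof α ≤ _ := key
  _ ≤ 1 * 1 := by
      rw [hsum]
      exact mul_le_mul_of_nonneg_left
        (Finset.prod_le_one (fun h _ => (hα h).1 _) (fun h _ => hle1 h _)) zero_le_one
  _ = 1 := one_mul 1


variable (ν : ∀ h : {h // h ∈ Fs}, Measure (A h.1 → ℝ)) [∀ h, IsProbabilityMeasure (ν h)]

lemma ae_simplex (hsimplex : ∀ h, ∀ᵐ α ∂(ν h), (∀ a, 0 ≤ α a) ∧ ∑ a, α a = 1) :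
    ∀ᵐ α ∂(Measure.pi ν), ∀ h, Simp (α h) := by
  rw [ae_all_iff]
  intro h
  have h0 : ν h {x | ¬ Simp x} = 0 := ae_iff.mp (hsimplex h)
  rw [ae_iff]
  exact Measure.pi_eval_preimage_null (μ := ν) (i := h) h0

lemma integrand_integrable (hsimplex : ∀ h, ∀ᵐ α ∂(ν h), (∀ a, 0 ≤ α a) ∧ ∑ a, α a = 1)
    (τ : List (ProfOn A Fs) → Bool) (t : ℕ) (prof : ProfOn A Fs) :
    Integrable (integrand A τ t prof) (Measure.pi ν) := by
  refine ⟨(integrand_meas A τ t prof).aestronglyMeasurable,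
    HasFiniteIntegral.of_bounded (C := 1) ?_⟩
  filter_upwards [ae_simplex A ν hsimplex] with α hα
  rw [Real.norm_eq_abs, abs_of_nonneg (integrand_nonneg A τ t prof α hα)]
  exact integrand_le_one A τ t prof α hα

lemma pProb_nonneg (hsimplex : ∀ h, ∀ᵐ α ∂(ν h), (∀ a, 0 ≤ α a) ∧ ∑ a, α a = 1)
    (τ : List (ProfOn A Fs) → Bool) (t : ℕ) (prof : ProfOn A Fs) :
    0 ≤ pProb A ν τ t prof := by
  refine integral_nonneg_of_ae ?_
  filter_upwards [ae_simplex A ν hsimplex] with α hα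
  exact integrand_nonneg A τ t prof α hα

lemma pProb_le_one (hsimplex : ∀ h, ∀ᵐ α ∂(ν h), (∀ a, 0 ≤ α a) ∧ ∑ a, α a = 1)
    (τ : List (ProfOn A Fs) → Bool) (t : ℕ) (prof : ProfOn A Fs) :
    pProb A ν τ t prof ≤ 1 := by
  have : pProb A ν τ t prof ≤ ∫ _α, (1 : ℝ) ∂(Measure.pi ν) := by
    refine integral_mono_ae (integrand_integrable A ν hsimplex τ t prof) (integrable_const 1) ?_
    filter_upwards [ae_simplex A ν hsimplex] with α hα
    exact integrand_le_one A τ t prof α hα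
  simpa using this

lemma pProb_zero (τ : List (ProfOn A Fs) → Bool) (prof : ProfOn A Fs) :
    pProb A ν τ 0 prof = ∫ α, ∏ h, α h (prof h) ∂(Measure.pi ν) := by
  unfold pProb
  refine integral_congr_ae (Filter.Eventually.of_forall fun α => ?_)
  simp only [Finset.univ_unique, Finset.sum_singleton]
  rw [if_pos (by omega)]
  simp

lemma pProb_zero_pos (hsimplex : ∀ h, ∀ᵐ α ∂(ν h), (∀ a, 0 ≤ α a) ∧ ∑ a, α a = 1)
    (hfull : ∀ h, ∀ u : Set (A h.1 → ℝ), IsOpen u →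
      (u ∩ {α : A h.1 → ℝ | (∀ a, 0 ≤ α a) ∧ ∑ a, α a = 1}).Nonempty → 0 < ν h u)
    (τ : List (ProfOn A Fs) → Bool) (prof : ProfOn A Fs) :
    0 < pProb A ν τ 0 prof := by
  rw [pProb_zero]
  set f : (∀ h : {h // h ∈ Fs}, A h.1 → ℝ) → ℝ := fun α => ∏ h, α h (prof h) with hf
  have hmeas : Measurable f :=
    Finset.measurable_prod _ fun h _ => (measurable_pi_apply (prof h)).comp (measurable_pi_apply h)
  have hnn : 0 ≤ᵐ[Measure.pi ν] f := by
    filter_upwards [ae_simplex A ν hsimplex] with α hα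
    exact Finset.prod_nonneg fun h _ => (hα h).1 _
  have hint : Integrable f (Measure.pi ν) := by
    refine ⟨hmeas.aestronglyMeasurable, HasFiniteIntegral.of_bounded (C := 1) ?_⟩
    filter_upwards [ae_simplex A ν hsimplex] with α hα
    rw [Real.norm_eq_abs, abs_of_nonneg (Finset.prod_nonneg fun h _ => (hα h).1 _)]
    refine Finset.prod_le_one (fun h _ => (hα h).1 _) (fun h _ => ?_)
    calc α h (prof h) ≤ ∑ b, α h b :=
          Finset.single_le_sum (fun b _ => (hα h).1 b) (Finset.mem_univ _)
    _ = 1 := (hα h).2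
  rw [integral_pos_iff_support_of_nonneg_ae hnn hint]
  set U : Set (∀ h : {h // h ∈ Fs}, A h.1 → ℝ) :=
    Set.univ.pi fun h => {x : A h.1 → ℝ | 1/2 < x (prof h)} with hU
  have hUsub : U ⊆ Function.support f := by
    intro α hα
    have : 0 < f α := Finset.prod_pos fun h _ =>
      lt_trans (by norm_num) (hα h (Set.mem_univ h))
    exact ne_of_gt this
  have hUpos : 0 < Measure.pi ν U := by
    rw [hU, Measure.pi_pi]
    rw [CanonicallyOrderedAdd.prod_pos]
    intro h _
    refine hfull h _ (isOpen_lt continuous_const (continuous_apply (prof h))) ?_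
    refine ⟨fun a => if a = prof h then 1 else 0, ?_, ?_, ?_⟩
    · show (1:ℝ)/2 < _
      norm_num
    · intro a; dsimp only; split <;> norm_num
    · simp [Finset.sum_ite_eq']
  exact hUpos.trans_le (measure_mono hUsub)

end Aux

/-- Lemma: the value of the auxiliary stopping problem defining the Gittins index of
`s_i` under stopping rule `τ` equals the expected stage-game payoff of `s_i` against
the synthetic correlated profile `α(ν, τ)`; moreover the synthetic correlated profile
is totally mixed whenever the belief has full support. -/
theorem gittins_value_eq_synthetic_payoff
    (owner : H → ι) (A : H → Type) [∀ h, Fintype (A h)] [∀ h, DecidableEq (A h)]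
    [∀ h, Nonempty (A h)]
    (payoff : ι → (∀ h, A h) → ℝ)
    (i : ι)
    (F : (∀ h : {h // owner h = i}, A h) → Finset H)
    -- the game is factorable for i
    (hFowner : ∀ si h, h ∈ F si → owner h ≠ i)
    (hFmeas : ∀ si (so so' : ∀ h : {h // owner h ≠ i}, A h),
      payoff i (combine owner A i si so) = payoff i (combine owner A i si so') ↔
        ∀ (h : H), h ∈ F si → ∀ (hne : owner h ≠ i), so ⟨h, hne⟩ = so' ⟨h, hne⟩)
    (hFdisj : ∀ si si', si ≠ si' → Disjoint (F si) (F si'))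
    (si : ∀ h : {h // owner h = i}, A h)
    -- effective discount factor β = δγ ∈ [0,1)
    (β : ℝ) (hβ0 : 0 ≤ β) (hβ1 : β < 1)
    -- a belief over opponents' mixed actions at the s_i-relevant information sets
    (ν : ∀ h : {h // h ∈ F si}, Measure (A h.1 → ℝ)) [∀ h, IsProbabilityMeasure (ν h)]
    (hsimplex : ∀ h, ∀ᵐ α ∂(ν h), (∀ a, 0 ≤ α a) ∧ ∑ a, α a = 1)
    -- a stopping rule (τ ≥ 1: decisions are made only after at least one observation)
    (τ : List (ProfOn A (F si)) → Bool) :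
    Vval A β ν τ (UpayOf A owner payoff i (F si) si) =
      (∑ prof : ProfOn A (F si),
        synth A β ν τ prof * UpayOf A owner payoff i (F si) si prof) ∧
    ((∀ h, FullSupportMeas (ν h)) →
      ∀ prof : ProfOn A (F si), 0 < synth A β ν τ prof) := by
  constructor
  · -- Part 1: Vval equals payoff against synthetic profile
    set Up := UpayOf A owner payoff i (F si) si with hUp
    have hsum1 : ∀ prof : ProfOn A (F si), Summable (fun t => β ^ t * pProb A ν τ t prof) := by
      intro prof
      refine Summable.of_nonneg_of_le
        (fun t => mul_nonneg (pow_nonneg hβ0 t) (pProb_nonneg A ν hsimplex τ t prof))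
        (fun t => ?_) (summable_geometric_of_lt_one hβ0 hβ1)
      calc β ^ t * pProb A ν τ t prof ≤ β ^ t * 1 :=
            mul_le_mul_of_nonneg_left (pProb_le_one A ν hsimplex τ t prof) (pow_nonneg hβ0 t)
      _ = β ^ t := mul_one _
    have key : (∑' t : ℕ, β ^ t * ∑ prof : ProfOn A (F si), pProb A ν τ t prof * Up prof)
        = ∑ prof : ProfOn A (F si), (∑' t : ℕ, β ^ t * pProb A ν τ t prof) * Up prof := by
      have h1 : ∀ t : ℕ, β ^ t * ∑ prof : ProfOn A (F si), pProb A ν τ t prof * Up prof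
          = ∑ prof : ProfOn A (F si), (β ^ t * pProb A ν τ t prof) * Up prof := by
        intro t
        rw [Finset.mul_sum]
        exact Finset.sum_congr rfl fun _ _ => by ring
      rw [tsum_congr h1, Summable.tsum_finsetSum (fun prof _ => (hsum1 prof).mul_right (Up prof))]
      exact Finset.sum_congr rfl fun prof _ => tsum_mul_right
    unfold Vval synth
    rw [key, Finset.sum_div]
    exact Finset.sum_congr rfl fun prof _ => (div_mul_eq_mul_div _ _ _).symm
  · -- Part 2: the synthetic profile is totally mixed
    intro hfull prof
    have hp0 : ∀ prof' : ProfOn A (F si), 0 < pProb A ν τ 0 prof' := fun prof' =>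
      pProb_zero_pos A ν hsimplex (fun h => hfull h) τ prof'
    have hsum1 : Summable (fun t => β ^ t * pProb A ν τ t prof) := by
      refine Summable.of_nonneg_of_le
        (fun t => mul_nonneg (pow_nonneg hβ0 t) (pProb_nonneg A ν hsimplex τ t prof))
        (fun t => ?_) (summable_geometric_of_lt_one hβ0 hβ1)
      calc β ^ t * pProb A ν τ t prof ≤ β ^ t * 1 :=
            mul_le_mul_of_nonneg_left (pProb_le_one A ν hsimplex τ t prof) (pow_nonneg hβ0 t)
      _ = β ^ t := mul_one _
    have hsurv_nonneg : ∀ t : ℕ, 0 ≤ surv A ν τ t := fun t =>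
      Finset.sum_nonneg fun prof' _ => pProb_nonneg A ν hsimplex τ t prof'
    have hsumD : Summable (fun t => β ^ t * surv A ν τ t) := by
      refine Summable.of_nonneg_of_le
        (fun t => mul_nonneg (pow_nonneg hβ0 t) (hsurv_nonneg t)) (fun t => ?_)
        ((summable_geometric_of_lt_one hβ0 hβ1).mul_right
          (Fintype.card (ProfOn A (F si)) : ℝ))
      refine mul_le_mul_of_nonneg_left ?_ (pow_nonneg hβ0 t)
      calc surv A ν τ t ≤ ∑ _prof : ProfOn A (F si), (1 : ℝ) :=
            Finset.sum_le_sum fun prof' _ => pProb_le_one A ν hsimplex τ t prof'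
      _ = (Fintype.card (ProfOn A (F si)) : ℝ) := by simp
    have hN : 0 < ∑' t : ℕ, β ^ t * pProb A ν τ t prof := by
      refine Summable.tsum_pos hsum1
        (fun t => mul_nonneg (pow_nonneg hβ0 t) (pProb_nonneg A ν hsimplex τ t prof)) 0 ?_
      simpa using hp0 prof
    have hD : 0 < ∑' t : ℕ, β ^ t * surv A ν τ t := by
      refine Summable.tsum_pos hsumD
        (fun t => mul_nonneg (pow_nonneg hβ0 t) (hsurv_nonneg t)) 0 ?_
      have : 0 < surv A ν τ 0 :=
        Finset.sum_pos (fun prof' _ => hp0 prof') Finset.univ_nonempty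
      simpa using this
    exact div_pos hN hD

end
end
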